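/- For every ε ∈ (0,1) there exists a constant C(ε) > 0 such that the following holds. Let V be a finite set with |V| = n ≥ 2 and κ : V × V → ℝ symmetric with κ ≥ 0. For every family (x^t)_{t=1}^{n−1} of functions V × V → [0,1] feasible for LP-ultrametric, there exists a family (y^t)_{t=1}^{n−1} of functions V × V → {0,1} feasible for ILP-ultrametric such that Σ_{t=1}^{n−1} Σ_{ {i,j} ⊆ V, i≠j } κ(i,j) y^t(i,j) ≤ C(ε) · (log n) · Σ_{t=1}^{n−1} Σ_{ {i,j} ⊆ V, i≠j } κ(i,j) x^t(i,j). In particular, the optimum value of ILP-ultrametric is at most C(ε) log n times the optimum value of LP-ultrametric. -/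

import Mathlib

/-- A family `x^t : V × V → [0,1]` (`t = 1, …, n-1`) is feasible for LP-ultrametric:
each layer is symmetric with zero diagonal, `[0,1]`-valued, satisfies the triangle
constraints, the layers are nonincreasing in `t`, and each layer satisfies the
spreading constraints. -/
def LPUltraFeasible {V : Type*} [Fintype V] [DecidableEq V] (n : ℕ)
    (x : ℕ → V → V → ℝ) : Prop :=
  (∀ t ∈ Finset.Icc 1 (n - 1), ∀ i j : V, x t i j = x t j i) ∧
  (∀ t ∈ Finset.Icc 1 (n - 1), ∀ i : V, x t i i = 0) ∧
  (∀ t ∈ Finset.Icc 1 (n - 1), ∀ i j : V, 0 ≤ x t i j ∧ x t i j ≤ 1) ∧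
  (∀ t ∈ Finset.Icc 1 (n - 1), ∀ i j k : V, x t i k ≤ x t i j + x t j k) ∧
  (∀ t ∈ Finset.Icc 1 (n - 2), ∀ i j : V, x (t + 1) i j ≤ x t i j) ∧
  (∀ t ∈ Finset.Icc 1 (n - 1), ∀ S : Finset V, ∀ i ∈ S,
    (S.card : ℝ) - t ≤ ∑ j ∈ S, x t i j)

/-- A family `y^t : V × V → {0,1}` (`t = 1, …, n-1`) is feasible for ILP-ultrametric:
each layer is 0/1-valued, symmetric with zero diagonal, satisfies the triangle
constraints and the spreading constraints `Σ_{i,j ∈ S} y^t i j ≥ 2` for `|S| = t + 1`;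
moreover the layer constraints `y^t ≥ y^{t+1}` and the hereditary constraints hold. -/
def ILPUltraFeasible {V : Type*} [Fintype V] [DecidableEq V] (n : ℕ)
    (y : ℕ → V → V → ℝ) : Prop :=
  (∀ t ∈ Finset.Icc 1 (n - 1), ∀ i j : V, y t i j = 0 ∨ y t i j = 1) ∧
  (∀ t ∈ Finset.Icc 1 (n - 1), ∀ i j : V, y t i j = y t j i) ∧
  (∀ t ∈ Finset.Icc 1 (n - 1), ∀ i : V, y t i i = 0) ∧
  (∀ t ∈ Finset.Icc 1 (n - 1), ∀ i j k : V, y t i k ≤ y t i j + y t j k) ∧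
  (∀ t ∈ Finset.Icc 1 (n - 1), ∀ S : Finset V, S.card = t + 1 →
    (2 : ℝ) ≤ ∑ i ∈ S, ∑ j ∈ S, y t i j) ∧
  (∀ t ∈ Finset.Icc 1 (n - 2), ∀ i j : V, y (t + 1) i j ≤ y t i j) ∧
  (∀ t ∈ Finset.Icc 1 (n - 1), ∀ S : Finset V, S.card ≤ n - 1 →
    ∑ i ∈ S, ∑ j ∈ S, y S.card i j ≤
      (S.card : ℝ) * ((∑ i ∈ S, ∑ j ∈ S, y t i j) +
        ∑ i ∈ S, ∑ j ∈ Sᶜ, (1 - y t i j)))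

set_option linter.unusedSectionVars false
set_option linter.unusedVariables false
set_option maxHeartbeats 1000000

namespace St12

open Finset

variable {V : Type} [Fintype V] [DecidableEq V]

structure Setup (V : Type) [Fintype V] [DecidableEq V] (n : ℕ) (x : ℕ → V → V → ℝ) : Prop where
  hcard : Fintype.card V = n
  h2 : 2 ≤ n
  hsym : ∀ t ∈ Finset.Icc 1 (n - 1), ∀ i j : V, x t i j = x t j i
  hdiag : ∀ t ∈ Finset.Icc 1 (n - 1), ∀ i : V, x t i i = 0
  hbd : ∀ t ∈ Finset.Icc 1 (n - 1), ∀ i j : V, 0 ≤ x t i j ∧ x t i j ≤ 1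
  htri : ∀ t ∈ Finset.Icc 1 (n - 1), ∀ i j k : V, x t i k ≤ x t i j + x t j k
  hlay : ∀ t ∈ Finset.Icc 1 (n - 2), ∀ i j : V, x (t + 1) i j ≤ x t i j
  hspread : ∀ t ∈ Finset.Icc 1 (n - 1), ∀ S : Finset V, ∀ i ∈ S,
      (S.card : ℝ) - t ≤ ∑ j ∈ S, x t i j

noncomputable def rho (n : ℕ) (x : ℕ → V → V → ℝ) (i j : V) : ℝ :=
  ∑ t ∈ Finset.Icc 1 (n - 1), x t i j

variable {n : ℕ} {x : ℕ → V → V → ℝ}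

lemma Setup.n1 (hs : Setup V n x) : 1 ≤ n - 1 := by have := hs.h2; omega

lemma x_mono (hs : Setup V n x) {s t : ℕ} (h1 : 1 ≤ s) (hst : s ≤ t) (ht : t ≤ n - 1)
    (i j : V) : x t i j ≤ x s i j := by
  induction t, hst using Nat.le_induction with
  | base => exact le_rfl
  | succ t hst ih =>
    have h2 := hs.h2
    have ht' : t ≤ n - 1 := by omega
    have hlay := hs.hlay t (by simp [Finset.mem_Icc]; omega) i j
    exact hlay.trans (ih ht')

lemma rho_nonneg (hs : Setup V n x) (i j : V) : 0 ≤ rho n x i j :=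
  Finset.sum_nonneg fun t ht => (hs.hbd t ht i j).1

lemma rho_symm (hs : Setup V n x) (i j : V) : rho n x i j = rho n x j i :=
  Finset.sum_congr rfl fun t ht => hs.hsym t ht i j

lemma rho_self (hs : Setup V n x) (i : V) : rho n x i i = 0 := by
  simpa [rho] using Finset.sum_eq_zero fun t ht => hs.hdiag t ht i

lemma rho_tri (hs : Setup V n x) (i j k : V) :
    rho n x i k ≤ rho n x i j + rho n x j k := by
  rw [rho, rho, rho, ← Finset.sum_add_distrib]
  exact Finset.sum_le_sum fun t ht => hs.htri t ht i j k

lemma x_one (hs : Setup V n x) {i j : V} (hij : i ≠ j) : x 1 i j = 1 := by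
  have h2 := hs.h2
  have h1m : (1 : ℕ) ∈ Finset.Icc 1 (n - 1) := by simp [Finset.mem_Icc]; omega
  have hspread := hs.hspread 1 h1m Finset.univ i (Finset.mem_univ i)
  have hcard : (Finset.univ : Finset V).card = n := by
    simpa [Finset.card_univ] using hs.hcard
  -- split off diagonal
  have hsum : ∑ j' ∈ Finset.univ, x 1 i j' = ∑ j' ∈ Finset.univ.erase i, x 1 i j' := by
    rw [← Finset.add_sum_erase _ _ (Finset.mem_univ i), hs.hdiag 1 h1m i, zero_add]
  have hjmem : j ∈ Finset.univ.erase i := by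
    simp [Finset.mem_erase]; exact fun h => hij h.symm
  have hsum2 : ∑ j' ∈ Finset.univ.erase i, x 1 i j' =
      x 1 i j + ∑ j' ∈ (Finset.univ.erase i).erase j, x 1 i j' := by
    rw [Finset.add_sum_erase _ _ hjmem]
  have hbound : ∑ j' ∈ (Finset.univ.erase i).erase j, x 1 i j' ≤ ((n : ℝ) - 2) := by
    have hcard2 : ((Finset.univ.erase i).erase j).card = n - 2 := by
      rw [Finset.card_erase_of_mem hjmem, Finset.card_erase_of_mem (Finset.mem_univ i), hcard]
      omega
    calc ∑ j' ∈ (Finset.univ.erase i).erase j, x 1 i j'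
        ≤ ∑ _j' ∈ (Finset.univ.erase i).erase j, (1 : ℝ) :=
          Finset.sum_le_sum fun t ht => (hs.hbd 1 h1m i t).2
      _ = ((n - 2 : ℕ) : ℝ) := by rw [Finset.sum_const, hcard2]; simp
      _ = (n : ℝ) - 2 := by push_cast [Nat.cast_sub h2]; ring
  have hub := (hs.hbd 1 h1m i j).2
  have hc : ((Finset.univ : Finset V).card : ℝ) - 1 ≤ ∑ j' ∈ Finset.univ, x 1 i j' := by
    simpa using hspread
  rw [hcard] at hc
  rw [hsum, hsum2] at hc
  linarith

lemma one_le_rho (hs : Setup V n x) {i j : V} (hij : i ≠ j) : 1 ≤ rho n x i j := by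
  have h1m : (1 : ℕ) ∈ Finset.Icc 1 (n - 1) := by have := hs.h2; simp [Finset.mem_Icc]; omega
  calc (1 : ℝ) = x 1 i j := (x_one hs hij).symm
    _ ≤ rho n x i j :=
      Finset.single_le_sum (fun t ht => (hs.hbd t ht i j).1) h1m

lemma card_ball (hs : Setup V n x) {τ : ℕ} (hτ1 : 1 ≤ τ) (hτ : τ ≤ n - 1) {R : ℝ}
    (hR : 0 ≤ R) (v : V) :
    ((Finset.univ.filter fun w => rho n x v w ≤ R).card : ℝ) * ((τ : ℝ) - R) ≤ (τ : ℝ) ^ 2 := by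
  set S := Finset.univ.filter fun w => rho n x v w ≤ R with hS
  have hτm : τ ∈ Finset.Icc 1 (n - 1) := by simp [Finset.mem_Icc]; omega
  have hτpos : (0 : ℝ) < τ := by exact_mod_cast hτ1
  have hvS : v ∈ S := by
    simp only [hS, Finset.mem_filter, Finset.mem_univ, true_and]
    rw [rho_self hs]; exact hR
  have hkey : ∀ w ∈ S, (τ : ℝ) * x τ v w ≤ R := by
    intro w hw
    have hwR : rho n x v w ≤ R := by
      simpa [hS, Finset.mem_filter] using hw
    have h1 : (τ : ℝ) * x τ v w = ∑ _s ∈ Finset.Icc 1 τ, x τ v w := by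
      rw [Finset.sum_const, Nat.card_Icc]; simp [nsmul_eq_mul]
    have h2 : ∑ _s ∈ Finset.Icc 1 τ, x τ v w ≤ ∑ s ∈ Finset.Icc 1 τ, x s v w := by
      refine Finset.sum_le_sum fun s hsm => ?_
      rw [Finset.mem_Icc] at hsm
      exact x_mono hs hsm.1 hsm.2 hτ v w
    have h3 : ∑ s ∈ Finset.Icc 1 τ, x s v w ≤ rho n x v w := by
      refine Finset.sum_le_sum_of_subset_of_nonneg ?_ ?_
      · exact Finset.Icc_subset_Icc le_rfl hτ
      · intro t htm _; exact (hs.hbd t htm v w).1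
    linarith
  have hspread := hs.hspread τ hτm S v hvS
  have hsum : ∑ j ∈ S, x τ v j ≤ (S.card : ℝ) * (R / τ) := by
    calc ∑ j ∈ S, x τ v j ≤ ∑ _j ∈ S, (R / τ) := by
          refine Finset.sum_le_sum fun w hw => ?_
          have := hkey w hw
          rw [le_div_iff₀ hτpos]; linarith
      _ = (S.card : ℝ) * (R / τ) := by rw [Finset.sum_const]; simp [nsmul_eq_mul]
  have hSc : (0 : ℝ) ≤ (S.card : ℝ) := by positivity
  have : (S.card : ℝ) - τ ≤ (S.card : ℝ) * (R / τ) := le_trans hspread hsum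
  have hmul : ((S.card : ℝ) - τ) * τ ≤ (S.card : ℝ) * R := by
    have := mul_le_mul_of_nonneg_right this (le_of_lt hτpos)
    calc ((S.card : ℝ) - τ) * τ ≤ (S.card : ℝ) * (R / τ) * τ := this
      _ = (S.card : ℝ) * R := by field_simp
  nlinarith


def MM (n : ℕ) : ℕ := n * 2 ^ (n + 1)

lemma MM_pos {n : ℕ} (hn : 2 ≤ n) : 0 < MM n := by
  have : 0 < 2 ^ (n + 1) := Nat.pow_pos (by norm_num)
  exact Nat.mul_pos (by omega) this

noncomputable def rr (n m jj : ℕ) : ℝ := (1 + (m : ℝ) / (MM n)) * 2 ^ jj / 2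

lemma rr_lb {n : ℕ} (hn : 2 ≤ n) (m jj : ℕ) : (2 : ℝ) ^ jj / 2 ≤ rr n m jj := by
  have hM : (0 : ℝ) < (MM n : ℝ) := by exact_mod_cast MM_pos hn
  have h1 : (1 : ℝ) ≤ 1 + (m : ℝ) / (MM n) := by
    have : (0:ℝ) ≤ (m : ℝ) / (MM n) := by positivity
    linarith
  rw [rr]
  have : (0:ℝ) < (2:ℝ)^jj := by positivity
  nlinarith

lemma rr_nonneg {n : ℕ} (hn : 2 ≤ n) (m jj : ℕ) : 0 ≤ rr n m jj := by
  have := rr_lb hn m jj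
  have : (0:ℝ) ≤ (2:ℝ)^jj / 2 := by positivity
  linarith [rr_lb hn m jj]

lemma rr_lt {n m : ℕ} (hn : 2 ≤ n) (hm : m < MM n) (jj : ℕ) : rr n m jj < 2 ^ jj := by
  have hM : (0 : ℝ) < (MM n : ℝ) := by exact_mod_cast MM_pos hn
  have h1 : (m : ℝ) / (MM n) < 1 := by
    rw [div_lt_one hM]; exact_mod_cast hm
  have h2 : (0:ℝ) < (2:ℝ)^jj := by positivity
  rw [rr]; nlinarith

noncomputable def qq (π : Equiv.Perm V) (v : V) : Fin (Fintype.card V) :=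
  (Fintype.equivFin V) (π v)

lemma qq_inj (π : Equiv.Perm V) : Function.Injective (qq π) := by
  intro a b h
  simpa using (Fintype.equivFin V).injective h |> π.injective

noncomputable def amin (π : Equiv.Perm V) (T : Finset V) (hT : T.Nonempty) : V :=
  π⁻¹ ((Fintype.equivFin V).symm ((T.image (qq π)).min' (hT.image _)))

lemma qq_amin (π : Equiv.Perm V) (T : Finset V) (hT : T.Nonempty) :
    qq π (amin π T hT) = (T.image (qq π)).min' (hT.image _) := by
  simp [amin, qq]

lemma amin_mem (π : Equiv.Perm V) (T : Finset V) (hT : T.Nonempty) : amin π T hT ∈ T := by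
  have hmem := Finset.min'_mem (T.image (qq π)) (hT.image _)
  rw [Finset.mem_image] at hmem
  obtain ⟨v, hvT, hv⟩ := hmem
  have : amin π T hT = v := by
    apply qq_inj π
    rw [qq_amin, ← hv]
  rwa [this]

lemma amin_min (π : Equiv.Perm V) (T : Finset V) (hT : T.Nonempty) :
    ∀ w ∈ T, qq π (amin π T hT) ≤ qq π w := by
  intro w hw
  rw [qq_amin]
  exact Finset.min'_le _ _ (Finset.mem_image_of_mem _ hw)

lemma amin_eq (π : Equiv.Perm V) (T : Finset V) (hT : T.Nonempty) {v : V} (hv : v ∈ T)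
    (h : ∀ w ∈ T, qq π v ≤ qq π w) : v = amin π T hT := by
  apply qq_inj π
  exact le_antisymm (h _ (amin_mem π T hT)) (amin_min π T hT v hv)

noncomputable def cRad (π : Equiv.Perm V) (d : V → V → ℝ) (r : ℝ) (u : V) : V :=
  if hT : (Finset.univ.filter fun v => d v u ≤ r).Nonempty then amin π _ hT else u

lemma cRad_close (π : Equiv.Perm V) (d : V → V → ℝ) {r : ℝ} {u : V} (hu : d u u ≤ r) :
    d (cRad π d r u) u ≤ r := by
  have hT : (Finset.univ.filter fun v => d v u ≤ r).Nonempty :=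
    ⟨u, by simp [hu]⟩
  rw [cRad, dif_pos hT]
  have := amin_mem π _ hT
  simpa using this

lemma cRad_min (π : Equiv.Perm V) (d : V → V → ℝ) {r : ℝ} {u : V} (hu : d u u ≤ r) :
    ∀ w, d w u ≤ r → qq π (cRad π d r u) ≤ qq π w := by
  intro w hw
  have hT : (Finset.univ.filter fun v => d v u ≤ r).Nonempty := ⟨u, by simp [hu]⟩
  rw [cRad, dif_pos hT]
  exact amin_min π _ hT w (by simp [hw])

lemma cRad_eq (π : Equiv.Perm V) (d : V → V → ℝ) {r : ℝ} {u v : V} (hu : d u u ≤ r)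
    (hv : d v u ≤ r) (h : ∀ w, d w u ≤ r → qq π v ≤ qq π w) : v = cRad π d r u := by
  have hT : (Finset.univ.filter fun v => d v u ≤ r).Nonempty := ⟨u, by simp [hu]⟩
  rw [cRad, dif_pos hT]
  exact amin_eq π _ hT (by simp [hv]) (fun w hw => h w (by simpa using hw))


noncomputable def cc (n : ℕ) (x : ℕ → V → V → ℝ) (π : Equiv.Perm V) (m jj : ℕ) (u : V) : V :=
  cRad π (rho n x) (rr n m jj) u

lemma cc_close (hs : Setup V n x) (π : Equiv.Perm V) (m jj : ℕ) (u : V) :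
    rho n x (cc n x π m jj u) u ≤ rr n m jj := by
  apply cRad_close
  rw [rho_self hs]; exact rr_nonneg hs.h2 m jj

lemma cc_min (hs : Setup V n x) (π : Equiv.Perm V) (m jj : ℕ) (u : V) :
    ∀ w, rho n x w u ≤ rr n m jj → qq π (cc n x π m jj u) ≤ qq π w := by
  apply cRad_min
  rw [rho_self hs]; exact rr_nonneg hs.h2 m jj

lemma cc_eq (hs : Setup V n x) (π : Equiv.Perm V) (m jj : ℕ) (u v : V)
    (hv : rho n x v u ≤ rr n m jj)
    (h : ∀ w, rho n x w u ≤ rr n m jj → qq π v ≤ qq π w) : v = cc n x π m jj u := by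
  apply cRad_eq π (rho n x) _ hv h
  rw [rho_self hs]; exact rr_nonneg hs.h2 m jj

def ks (s : ℕ) : ℕ := Nat.log 2 s - 2

lemma ks_mono : Monotone ks := fun a b h => Nat.sub_le_sub_right (Nat.log_mono_right h) 2

lemma ks_pow {s : ℕ} (h4 : 4 ≤ s) : 2 ^ (ks s + 2) ≤ s := by
  have hlog : 2 ≤ Nat.log 2 s := by
    rw [Nat.le_log_iff_pow_le (by norm_num) (by omega)]
    simpa using h4
  have : ks s + 2 = Nat.log 2 s := by rw [ks]; omega
  rw [this]
  exact Nat.pow_log_le_self 2 (by omega)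

lemma lt_pow_of_ks_le {t jj : ℕ} (h4 : 4 ≤ t) (h : ks t ≤ jj) : t < 2 ^ (jj + 3) := by
  have hlog : 2 ≤ Nat.log 2 t := by
    rw [Nat.le_log_iff_pow_le (by norm_num) (by omega)]
    simpa using h4
  have hlt : t < 2 ^ (Nat.log 2 t + 1) := Nat.lt_pow_succ_log_self (by norm_num) t
  have : Nat.log 2 t + 1 ≤ jj + 3 := by rw [ks] at h; omega
  exact lt_of_lt_of_le hlt (Nat.pow_le_pow_right (by norm_num) this)

noncomputable def Pf (n : ℕ) (x : ℕ → V → V → ℝ) (π : Equiv.Perm V) (m : ℕ) (s : ℕ)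
    (i : V) : Finset V :=
  if s ≤ 3 then {i}
  else Finset.univ.filter fun w => ∀ jj ∈ Finset.Icc (ks s) n, cc n x π m jj w = cc n x π m jj i

lemma Pf_mem_self (n : ℕ) (x : ℕ → V → V → ℝ) (π : Equiv.Perm V) (m s : ℕ) (i : V) :
    i ∈ Pf n x π m s i := by
  rw [Pf]; split
  · simp
  · simp

lemma Pf_eq_of_mem {π : Equiv.Perm V} {m s : ℕ} {i j : V}
    (h : j ∈ Pf n x π m s i) : Pf n x π m s j = Pf n x π m s i := by
  by_cases hs3 : s ≤ 3
  · rw [Pf, if_pos hs3] at h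
    simp only [Finset.mem_singleton] at h; subst h; rfl
  · rw [Pf, if_neg hs3] at h
    simp only [Finset.mem_filter, Finset.mem_univ, true_and] at h
    rw [Pf, Pf, if_neg hs3, if_neg hs3]
    ext w
    simp only [Finset.mem_filter, Finset.mem_univ, true_and]
    exact ⟨fun hw jj hjj => (hw jj hjj).trans (h jj hjj),
      fun hw jj hjj => (hw jj hjj).trans (h jj hjj).symm⟩

lemma Pf_mono {π : Equiv.Perm V} {m : ℕ} {s s' : ℕ} (hss : s ≤ s') (i : V) :
    Pf n x π m s i ⊆ Pf n x π m s' i := by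
  intro w hw
  rw [Pf] at *
  by_cases hs' : s' ≤ 3
  · have hs : s ≤ 3 := le_trans hss hs'
    rw [if_pos hs] at hw; rw [if_pos hs']; exact hw
  · rw [if_neg hs']
    by_cases hs : s ≤ 3
    · rw [if_pos hs] at hw
      simp at hw; subst hw
      simp
    · rw [if_neg hs] at hw
      simp only [Finset.mem_filter, Finset.mem_univ, true_and] at hw ⊢
      intro jj hjj
      rw [Finset.mem_Icc] at hjj
      exact hw jj (Finset.mem_Icc.mpr ⟨le_trans (ks_mono hss) hjj.1, hjj.2⟩)

lemma card_Pf (hs : Setup V n x) (π : Equiv.Perm V) {m : ℕ} (hm : m < MM n) {s : ℕ}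
    (hs1 : 1 ≤ s) (hsn : s ≤ n - 1) (i : V) : (Pf n x π m s i).card ≤ s := by
  by_cases hs3 : s ≤ 3
  · rw [Pf, if_pos hs3]; simpa using hs1
  · push_neg at hs3
    have h4 : 4 ≤ s := hs3
    have hpow : 2 ^ (ks s + 2) ≤ s := ks_pow h4
    set k := ks s with hk
    have hkn : k ≤ n := by
      have : k ≤ Nat.log 2 s := by rw [hk, ks]; omega
      have h2 : Nat.log 2 s ≤ s := Nat.log_le_self 2 s
      have := hs.h2
      omega
    set v0 := cc n x π m k i with hv0
    have hsub : Pf n x π m s i ⊆ Finset.univ.filter fun w => rho n x v0 w ≤ rr n m k := by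
      intro w hw
      rw [Pf, if_neg (by omega)] at hw
      simp only [Finset.mem_filter, Finset.mem_univ, true_and] at hw ⊢
      have hkmem : k ∈ Finset.Icc (ks s) n := Finset.mem_Icc.mpr ⟨le_rfl, hkn⟩
      have hcw := hw k hkmem
      have := cc_close hs π m k w
      rw [hcw, ← hv0] at this
      exact this
    -- ball bound with τ = 2^(k+1)
    set τ := 2 ^ (k + 1) with hτ
    have hτ1 : 1 ≤ τ := Nat.one_le_two_pow
    have hτn : τ ≤ n - 1 := by
      have h1 : τ < 2 ^ (k + 2) := by
        rw [hτ]; exact Nat.pow_lt_pow_right (by norm_num) (by omega)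
      omega
    have hball := card_ball hs hτ1 hτn (rr_nonneg hs.h2 m k) v0
    have hRlt : rr n m k < 2 ^ k := rr_lt hs.h2 hm k
    have hτR : (2:ℝ) ^ k ≤ (τ : ℝ) - rr n m k := by
      have : (τ : ℝ) = 2 ^ (k + 1) := by rw [hτ]; push_cast; ring
      rw [this]
      have h2k : (2:ℝ) ^ (k+1) = 2 * 2^k := by ring
      linarith
    have hcardle : ((Finset.univ.filter fun w => rho n x v0 w ≤ rr n m k).card : ℝ)
        ≤ 2 ^ (k + 2) := by
      set c := ((Finset.univ.filter fun w => rho n x v0 w ≤ rr n m k).card : ℝ) with hc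
      have hc0 : 0 ≤ c := by positivity
      have h1 : c * 2 ^ k ≤ (τ:ℝ) ^ 2 := by
        calc c * 2 ^ k ≤ c * ((τ : ℝ) - rr n m k) := by
              apply mul_le_mul_of_nonneg_left hτR hc0
          _ ≤ (τ:ℝ)^2 := hball
      have hτr : (τ : ℝ) = 2 ^ (k+1) := by rw [hτ]; push_cast; ring
      rw [hτr] at h1
      have hp : (0:ℝ) < 2 ^ k := by positivity
      have : ((2:ℝ) ^ (k+1))^2 = 2^(k+2) * 2^k := by ring
      rw [this] at h1
      exact le_of_mul_le_mul_right h1 hp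
    have hn1 : (Pf n x π m s i).card ≤ 2 ^ (k + 2) := by
      have h1 : ((Pf n x π m s i).card : ℝ) ≤ 2 ^ (k+2) :=
        le_trans (by exact_mod_cast Finset.card_le_card hsub) hcardle
      exact_mod_cast h1
    exact le_trans hn1 hpow


noncomputable def gset (n : ℕ) (x : ℕ → V → V → ℝ) (π : Equiv.Perm V) (m t : ℕ) (i : V) :
    Finset ℕ :=
  (Finset.Icc 1 (n - 1)).filter fun s => (Pf n x π m s i).card ≤ t

noncomputable def gg (n : ℕ) (x : ℕ → V → V → ℝ) (π : Equiv.Perm V) (m t : ℕ) (i : V) : ℕ :=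
  if h : (gset n x π m t i).Nonempty then (gset n x π m t i).max' h else 1

lemma gset_nonempty (hs : Setup V n x) (π : Equiv.Perm V) {m : ℕ} (hm : m < MM n) {t : ℕ}
    (ht1 : 1 ≤ t) (htn : t ≤ n - 1) (i : V) : (gset n x π m t i).Nonempty := by
  refine ⟨t, ?_⟩
  rw [gset, Finset.mem_filter, Finset.mem_Icc]
  exact ⟨⟨ht1, htn⟩, card_Pf hs π hm ht1 htn i⟩

lemma gg_mem (hs : Setup V n x) (π : Equiv.Perm V) {m : ℕ} (hm : m < MM n) {t : ℕ}
    (ht1 : 1 ≤ t) (htn : t ≤ n - 1) (i : V) : gg n x π m t i ∈ gset n x π m t i := by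
  rw [gg, dif_pos (gset_nonempty hs π hm ht1 htn i)]
  exact Finset.max'_mem _ _

lemma gg_Icc (hs : Setup V n x) (π : Equiv.Perm V) {m : ℕ} (hm : m < MM n) {t : ℕ}
    (ht1 : 1 ≤ t) (htn : t ≤ n - 1) (i : V) :
    1 ≤ gg n x π m t i ∧ gg n x π m t i ≤ n - 1 := by
  have := gg_mem hs π hm ht1 htn i
  rw [gset, Finset.mem_filter, Finset.mem_Icc] at this
  exact this.1

lemma card_Pf_gg (hs : Setup V n x) (π : Equiv.Perm V) {m : ℕ} (hm : m < MM n) {t : ℕ}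
    (ht1 : 1 ≤ t) (htn : t ≤ n - 1) (i : V) : (Pf n x π m (gg n x π m t i) i).card ≤ t := by
  have := gg_mem hs π hm ht1 htn i
  rw [gset, Finset.mem_filter] at this
  exact this.2

lemma le_gg (hs : Setup V n x) (π : Equiv.Perm V) {m : ℕ} (hm : m < MM n) {t : ℕ}
    (ht1 : 1 ≤ t) (htn : t ≤ n - 1) (i : V) {s : ℕ} (hsmem : s ∈ gset n x π m t i) :
    s ≤ gg n x π m t i := by
  rw [gg, dif_pos (gset_nonempty hs π hm ht1 htn i)]
  exact Finset.le_max' _ _ hsmem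

lemma t_le_gg (hs : Setup V n x) (π : Equiv.Perm V) {m : ℕ} (hm : m < MM n) {t : ℕ}
    (ht1 : 1 ≤ t) (htn : t ≤ n - 1) (i : V) : t ≤ gg n x π m t i := by
  apply le_gg hs π hm ht1 htn
  rw [gset, Finset.mem_filter, Finset.mem_Icc]
  exact ⟨⟨ht1, htn⟩, card_Pf hs π hm ht1 htn i⟩

lemma gg_mono (hs : Setup V n x) (π : Equiv.Perm V) {m : ℕ} (hm : m < MM n) {t t' : ℕ}
    (ht1 : 1 ≤ t) (htt : t ≤ t') (htn : t' ≤ n - 1) (i : V) :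
    gg n x π m t i ≤ gg n x π m t' i := by
  apply le_gg hs π hm (le_trans ht1 htt) htn
  have := gg_mem hs π hm ht1 (le_trans htt htn) i
  rw [gset, Finset.mem_filter] at this ⊢
  exact ⟨this.1, le_trans this.2 htt⟩

lemma gg_congr (hs : Setup V n x) (π : Equiv.Perm V) {m : ℕ} (hm : m < MM n) {t : ℕ}
    (ht1 : 1 ≤ t) (htn : t ≤ n - 1) {i j : V}
    (hj : j ∈ Pf n x π m (gg n x π m t i) i) : gg n x π m t j = gg n x π m t i := by
  set s0 := gg n x π m t i with hs0
  have hPeq : Pf n x π m s0 j = Pf n x π m s0 i := Pf_eq_of_mem hj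
  have h1 : s0 ≤ gg n x π m t j := by
    apply le_gg hs π hm ht1 htn
    rw [gset, Finset.mem_filter]
    have hmem := gg_mem hs π hm ht1 htn i
    rw [gset, Finset.mem_filter] at hmem
    exact ⟨hmem.1, by rw [hPeq]; exact hmem.2⟩
  have h2 : gg n x π m t j ≤ s0 := by
    apply le_gg hs π hm ht1 htn
    set g1 := gg n x π m t j with hg1
    have hiPs0j : i ∈ Pf n x π m s0 j := by rw [hPeq]; exact Pf_mem_self n x π m s0 i
    have hiPg1j : i ∈ Pf n x π m g1 j := Pf_mono h1 j hiPs0j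
    have hPg1 : Pf n x π m g1 i = Pf n x π m g1 j := Pf_eq_of_mem hiPg1j
    have hmem := gg_mem hs π hm ht1 htn j
    rw [gset, Finset.mem_filter] at hmem
    rw [gset, Finset.mem_filter]
    exact ⟨hmem.1, by rw [hPg1]; exact hmem.2⟩
  omega

def tc (n t : ℕ) : ℕ := max 1 (min t (n - 1))

lemma tc_eq {t : ℕ} (ht1 : 1 ≤ t) (htn : t ≤ n - 1) : tc n t = t := by
  rw [tc]; omega

lemma tc_Icc (hs : Setup V n x) (t : ℕ) : 1 ≤ tc n t ∧ tc n t ≤ n - 1 := by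
  have := hs.n1; rw [tc]; omega

noncomputable def Qf (n : ℕ) (x : ℕ → V → V → ℝ) (π : Equiv.Perm V) (m t : ℕ) (i : V) :
    Finset V :=
  Pf n x π m (gg n x π m (tc n t) i) i

noncomputable def yy (n : ℕ) (x : ℕ → V → V → ℝ) (π : Equiv.Perm V) (m : ℕ) (t : ℕ)
    (i j : V) : ℝ :=
  if j ∈ Qf n x π m t i then 0 else 1

lemma Qf_mem_self (n : ℕ) (x : ℕ → V → V → ℝ) (π : Equiv.Perm V) (m t : ℕ) (i : V) :
    i ∈ Qf n x π m t i := Pf_mem_self n x π m _ i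

lemma yy_diag (n : ℕ) (x : ℕ → V → V → ℝ) (π : Equiv.Perm V) (m t : ℕ) (i : V) :
    yy n x π m t i i = 0 := by
  rw [yy, if_pos (Qf_mem_self n x π m t i)]

lemma yy_nonneg (n : ℕ) (x : ℕ → V → V → ℝ) (π : Equiv.Perm V) (m t : ℕ) (i j : V) :
    0 ≤ yy n x π m t i j := by
  rw [yy]; split <;> norm_num

lemma yy_le_one (n : ℕ) (x : ℕ → V → V → ℝ) (π : Equiv.Perm V) (m t : ℕ) (i j : V) :
    yy n x π m t i j ≤ 1 := by
  rw [yy]; split <;> norm_num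

lemma Qf_eq_of_mem (hs : Setup V n x) {π : Equiv.Perm V} {m : ℕ} (hm : m < MM n) {t : ℕ}
    {i j : V} (hj : j ∈ Qf n x π m t i) : Qf n x π m t j = Qf n x π m t i := by
  have htc := tc_Icc hs t
  rw [Qf] at hj ⊢
  rw [gg_congr hs π hm htc.1 htc.2 hj]
  exact Pf_eq_of_mem hj

lemma Qf_symm_mem (hs : Setup V n x) {π : Equiv.Perm V} {m : ℕ} (hm : m < MM n) {t : ℕ}
    {i j : V} (hj : j ∈ Qf n x π m t i) : i ∈ Qf n x π m t j := by
  rw [Qf_eq_of_mem hs hm hj]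
  exact Qf_mem_self n x π m t i

lemma card_Qf (hs : Setup V n x) (π : Equiv.Perm V) {m : ℕ} (hm : m < MM n) {t : ℕ}
    (ht1 : 1 ≤ t) (htn : t ≤ n - 1) (i : V) : (Qf n x π m t i).card ≤ t := by
  rw [Qf, tc_eq ht1 htn]
  exact card_Pf_gg hs π hm ht1 htn i

lemma Qf_mono (hs : Setup V n x) (π : Equiv.Perm V) {m : ℕ} (hm : m < MM n) {t t' : ℕ}
    (ht1 : 1 ≤ t) (htt : t ≤ t') (htn : t' ≤ n - 1) (i : V) :
    Qf n x π m t i ⊆ Qf n x π m t' i := by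
  rw [Qf, Qf, tc_eq ht1 (le_trans htt htn), tc_eq (le_trans ht1 htt) htn]
  exact Pf_mono (gg_mono hs π hm ht1 htt htn i) i

lemma Pf_subset_Qf (hs : Setup V n x) (π : Equiv.Perm V) {m : ℕ} (hm : m < MM n) {t : ℕ}
    (ht1 : 1 ≤ t) (htn : t ≤ n - 1) (i : V) : Pf n x π m t i ⊆ Qf n x π m t i := by
  rw [Qf, tc_eq ht1 htn]
  exact Pf_mono (t_le_gg hs π hm ht1 htn i) i

lemma Qf_hered (hs : Setup V n x) (π : Equiv.Perm V) {m : ℕ} (hm : m < MM n) {t : ℕ}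
    (ht1 : 1 ≤ t) (htn : t ≤ n - 1) (i : V) :
    Qf n x π m t i ⊆ Qf n x π m (Qf n x π m t i).card i := by
  have htc : tc n t = t := tc_eq ht1 htn
  set c := (Qf n x π m t i).card with hc
  have hc1 : 1 ≤ c := by
    rw [hc]; exact Finset.card_pos.mpr ⟨i, Qf_mem_self n x π m t i⟩
  have hcn : c ≤ n - 1 := by
    rw [hc]; exact le_trans (card_Qf hs π hm ht1 htn i) htn
  have hcardeq : (Pf n x π m (gg n x π m t i) i).card = c := by
    rw [hc, Qf, htc]
  have hle : gg n x π m t i ≤ gg n x π m c i := by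
    apply le_gg hs π hm hc1 hcn
    have hs0mem := gg_mem hs π hm ht1 htn i
    rw [gset, Finset.mem_filter] at hs0mem ⊢
    exact ⟨hs0mem.1, le_of_eq hcardeq⟩
  have e1 : Qf n x π m t i = Pf n x π m (gg n x π m t i) i := by rw [Qf, htc]
  have e2 : Qf n x π m c i = Pf n x π m (gg n x π m c i) i := by rw [Qf, tc_eq hc1 hcn]
  rw [e1, e2]
  exact Pf_mono hle i

theorem yy_feasible (hs : Setup V n x) (π : Equiv.Perm V) {m : ℕ} (hm : m < MM n) :
    ILPUltraFeasible n (yy n x π m) := by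
  refine ⟨?_, ?_, ?_, ?_, ?_, ?_, ?_⟩
  · -- 0/1 valued
    intro t _ i j
    rw [yy]; split
    · exact Or.inl rfl
    · exact Or.inr rfl
  · -- symmetry
    intro t htm i j
    rw [Finset.mem_Icc] at htm
    rw [yy, yy]
    by_cases h : j ∈ Qf n x π m t i
    · rw [if_pos h, if_pos (Qf_symm_mem hs hm h)]
    · rw [if_neg h, if_neg (fun h' => h (Qf_symm_mem hs hm h'))]
  · -- diagonal
    intro t _ i
    exact yy_diag n x π m t i
  · -- triangle
    intro t htm i j k
    rw [Finset.mem_Icc] at htm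
    by_cases hij : j ∈ Qf n x π m t i
    · by_cases hjk : k ∈ Qf n x π m t j
      · have hik : k ∈ Qf n x π m t i := by
          rw [← Qf_eq_of_mem hs hm hij]; exact hjk
        rw [yy, yy, yy, if_pos hij, if_pos hjk, if_pos hik]; norm_num
      · rw [yy, yy, yy, if_pos hij, if_neg hjk]
        have := yy_le_one n x π m t i k
        rw [yy] at this
        split <;> norm_num
    · have hyij : yy n x π m t i j = 1 := by rw [yy, if_neg hij]
      have h1 := yy_le_one n x π m t i k
      have h2 := yy_nonneg n x π m t j k
      linarith
  · -- spreading
    intro t htm S hS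
    rw [Finset.mem_Icc] at htm
    have hSne : S.Nonempty := by
      rw [← Finset.card_pos, hS]; omega
    obtain ⟨i, hi⟩ := hSne
    have hnotsub : ¬ S ⊆ Qf n x π m t i := by
      intro hsub
      have h1 := Finset.card_le_card hsub
      have h2 := card_Qf hs π hm htm.1 htm.2 i
      omega
    obtain ⟨j, hjS, hjn⟩ := Finset.not_subset.mp hnotsub
    have hij : i ≠ j := fun h => hjn (h ▸ Qf_mem_self n x π m t i)
    have hyij : yy n x π m t i j = 1 := by rw [yy, if_neg hjn]
    have hyji : yy n x π m t j i = 1 := by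
      rw [yy, if_neg (fun h' => hjn (Qf_symm_mem hs hm h'))]
    have hrow : ∀ a ∈ S, ∀ b ∈ S, yy n x π m t a b ≤ ∑ c ∈ S, yy n x π m t a c := by
      intro a _ b hb
      exact Finset.single_le_sum (fun c _ => yy_nonneg n x π m t a c) hb
    have hpair : yy n x π m t i j + yy n x π m t j i ≤
        (∑ c ∈ S, yy n x π m t i c) + ∑ c ∈ S, yy n x π m t j c :=
      add_le_add (hrow i hi j hjS) (hrow j hjS i hi)
    have hsum : (∑ c ∈ S, yy n x π m t i c) + ∑ c ∈ S, yy n x π m t j c ≤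
        ∑ a ∈ S, ∑ b ∈ S, yy n x π m t a b := by
      have : ∑ a ∈ {i, j}, ∑ b ∈ S, yy n x π m t a b ≤
          ∑ a ∈ S, ∑ b ∈ S, yy n x π m t a b := by
        apply Finset.sum_le_sum_of_subset_of_nonneg
        · intro a ha
          simp only [Finset.mem_insert, Finset.mem_singleton] at ha
          rcases ha with h | h <;> subst h <;> assumption
        · intro a _ _
          exact Finset.sum_nonneg fun b _ => yy_nonneg n x π m t a b
      rwa [Finset.sum_pair hij] at this
    rw [hyij, hyji] at hpair
    linarith
  · -- layers
    intro t htm i j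
    rw [Finset.mem_Icc] at htm
    have h2 := hs.h2
    rw [yy, yy]
    by_cases h : j ∈ Qf n x π m t i
    · rw [if_pos (Qf_mono hs π hm (by omega) (by omega) (by omega) i h)]
      split <;> norm_num
    · rw [if_neg h]
      split <;> norm_num
  · -- hereditary
    intro t htm S hScard
    rw [Finset.mem_Icc] at htm
    rcases Finset.eq_empty_or_nonempty S with rfl | hSne
    · simp
    have hm1 : 1 ≤ S.card := Finset.card_pos.mpr hSne
    set mS := S.card with hmS
    have hmSn : mS ≤ n - 1 := hScard
    -- pointwise bound
    have hpt : ∀ i ∈ S, ∀ j ∈ S, yy n x π m mS i j ≤ yy n x π m t i j +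
        (if (¬ Qf n x π m t i ⊆ S) ∧ j ∈ Qf n x π m t i then (1:ℝ) else 0) := by
      intro i _ j hjS
      by_cases hQ : j ∈ Qf n x π m t i
      · by_cases hsub : Qf n x π m t i ⊆ S
        · -- yy mS i j = 0
          have hc1 : 1 ≤ (Qf n x π m t i).card :=
            Finset.card_pos.mpr ⟨i, Qf_mem_self n x π m t i⟩
          have hccard : (Qf n x π m t i).card ≤ mS := by
            rw [hmS]; exact Finset.card_le_card hsub
          have hj2 : j ∈ Qf n x π m (Qf n x π m t i).card i :=
            Qf_hered hs π hm htm.1 htm.2 i hQ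
          have hj3 : j ∈ Qf n x π m mS i :=
            Qf_mono hs π hm hc1 hccard hmSn i hj2
          rw [yy, if_pos hj3]
          have := yy_nonneg n x π m t i j
          split <;> norm_num <;> linarith
        · have h1 := yy_le_one n x π m mS i j
          have h2 := yy_nonneg n x π m t i j
          rw [if_pos ⟨hsub, hQ⟩]
          linarith
      · have h1 := yy_le_one n x π m mS i j
        have hyt : yy n x π m t i j = 1 := by rw [yy, if_neg hQ]
        rw [hyt]
        have : (0:ℝ) ≤ if (¬ Qf n x π m t i ⊆ S) ∧ j ∈ Qf n x π m t i then (1:ℝ) else 0 := by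
          split <;> norm_num
        linarith
    -- sum it
    have hsum1 : ∑ i ∈ S, ∑ j ∈ S, yy n x π m mS i j ≤
        (∑ i ∈ S, ∑ j ∈ S, yy n x π m t i j) +
        ∑ i ∈ S, ∑ j ∈ S, (if (¬ Qf n x π m t i ⊆ S) ∧ j ∈ Qf n x π m t i then (1:ℝ) else 0) := by
      rw [← Finset.sum_add_distrib]
      refine Finset.sum_le_sum fun i hi => ?_
      rw [← Finset.sum_add_distrib]
      exact Finset.sum_le_sum fun j hj => hpt i hi j hj
    -- inner indicator sum ≤ mS * indicator(¬sub)
    have hsum2 : ∀ i ∈ S,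
        ∑ j ∈ S, (if (¬ Qf n x π m t i ⊆ S) ∧ j ∈ Qf n x π m t i then (1:ℝ) else 0) ≤
        (mS : ℝ) * (if ¬ Qf n x π m t i ⊆ S then 1 else 0) := by
      intro i _
      by_cases hsub : Qf n x π m t i ⊆ S
      · simp only [hsub, not_true_eq_false, false_and, if_false]
        simp
      · rw [if_pos hsub, mul_one]
        calc ∑ j ∈ S, (if (¬ Qf n x π m t i ⊆ S) ∧ j ∈ Qf n x π m t i then (1:ℝ) else 0)
            ≤ ∑ _j ∈ S, (1:ℝ) := by
              refine Finset.sum_le_sum fun j _ => ?_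
              split <;> norm_num
          _ = (mS : ℝ) := by rw [Finset.sum_const, hmS]; simp
    -- number of non-sub rows ≤ B
    have hsum3 : ∑ i ∈ S, (if ¬ Qf n x π m t i ⊆ S then (1:ℝ) else 0) ≤
        ∑ i ∈ S, ∑ j ∈ Sᶜ, (1 - yy n x π m t i j) := by
      refine Finset.sum_le_sum fun i _ => ?_
      by_cases hsub : Qf n x π m t i ⊆ S
      · rw [if_neg (by simpa using hsub)]
        refine Finset.sum_nonneg fun j _ => ?_
        have := yy_le_one n x π m t i j
        linarith
      · rw [if_pos hsub]
        obtain ⟨j0, hj0Q, hj0S⟩ := Finset.not_subset.mp hsub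
        have hj0c : j0 ∈ Sᶜ := Finset.mem_compl.mpr hj0S
        have hterm : (1:ℝ) - yy n x π m t i j0 = 1 := by
          rw [yy, if_pos hj0Q]; ring
        calc (1:ℝ) = 1 - yy n x π m t i j0 := hterm.symm
          _ ≤ ∑ j ∈ Sᶜ, (1 - yy n x π m t i j) := by
            refine Finset.single_le_sum (f := fun j => (1:ℝ) - yy n x π m t i j)
              (fun j _ => ?_) hj0c
            show (0:ℝ) ≤ 1 - yy n x π m t i j
            have := yy_le_one n x π m t i j
            linarith
    have hA0 : (0:ℝ) ≤ ∑ i ∈ S, ∑ j ∈ S, yy n x π m t i j :=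
      Finset.sum_nonneg fun i _ => Finset.sum_nonneg fun j _ => yy_nonneg n x π m t i j
    have hmR : (1:ℝ) ≤ (mS:ℝ) := by exact_mod_cast hm1
    calc ∑ i ∈ S, ∑ j ∈ S, yy n x π m mS i j
        ≤ (∑ i ∈ S, ∑ j ∈ S, yy n x π m t i j) +
          ∑ i ∈ S, ∑ j ∈ S, (if (¬ Qf n x π m t i ⊆ S) ∧ j ∈ Qf n x π m t i then (1:ℝ) else 0) :=
          hsum1
      _ ≤ (∑ i ∈ S, ∑ j ∈ S, yy n x π m t i j) +
          ∑ i ∈ S, (mS : ℝ) * (if ¬ Qf n x π m t i ⊆ S then 1 else 0) := by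
          refine add_le_add_right (Finset.sum_le_sum fun i hi => hsum2 i hi) _
      _ = (∑ i ∈ S, ∑ j ∈ S, yy n x π m t i j) +
          (mS:ℝ) * ∑ i ∈ S, (if ¬ Qf n x π m t i ⊆ S then (1:ℝ) else 0) := by
          rw [Finset.mul_sum]
      _ ≤ (∑ i ∈ S, ∑ j ∈ S, yy n x π m t i j) +
          (mS:ℝ) * ∑ i ∈ S, ∑ j ∈ Sᶜ, (1 - yy n x π m t i j) := by
          refine add_le_add_right ?_ _
          refine mul_le_mul_of_nonneg_left hsum3 (by positivity)
      _ ≤ (mS:ℝ) * ((∑ i ∈ S, ∑ j ∈ S, yy n x π m t i j) +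
          ∑ i ∈ S, ∑ j ∈ Sᶜ, (1 - yy n x π m t i j)) := by
          have hB0 : (0:ℝ) ≤ ∑ i ∈ S, ∑ j ∈ Sᶜ, (1 - yy n x π m t i j) := by
            refine Finset.sum_nonneg fun i _ => Finset.sum_nonneg fun j _ => ?_
            have := yy_le_one n x π m t i j
            linarith
          nlinarith

noncomputable def cutI (n : ℕ) (x : ℕ → V → V → ℝ) (π : Equiv.Perm V) (m jj : ℕ)
    (i j : V) : ℝ :=
  if cc n x π m jj i = cc n x π m jj j then 0 else 1

lemma cutI_nonneg (n : ℕ) (x : ℕ → V → V → ℝ) (π : Equiv.Perm V) (m jj : ℕ) (i j : V) :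
    0 ≤ cutI n x π m jj i j := by
  rw [cutI]; split <;> norm_num

lemma sum_yy_le (hs : Setup V n x) (π : Equiv.Perm V) {m : ℕ} (hm : m < MM n) {i j : V} :
    ∑ t ∈ Finset.Icc 1 (n - 1), yy n x π m t i j ≤
      3 + 8 * ∑ jj ∈ Finset.range (n + 1), (2:ℝ) ^ jj * cutI n x π m jj i j := by
  have hpt : ∀ t ∈ Finset.Icc 1 (n - 1), yy n x π m t i j ≤
      (if t ≤ 3 then (1:ℝ) else 0) +
      (if 4 ≤ t then ∑ jj ∈ Finset.Icc (ks t) n, cutI n x π m jj i j else 0) := by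
    intro t htm
    rw [Finset.mem_Icc] at htm
    by_cases ht3 : t ≤ 3
    · rw [if_pos ht3, if_neg (by omega)]
      have := yy_le_one n x π m t i j
      linarith
    · push_neg at ht3
      rw [if_neg (by omega), if_pos (by omega), zero_add]
      by_cases hQ : j ∈ Qf n x π m t i
      · rw [yy, if_pos hQ]
        exact Finset.sum_nonneg fun jj _ => cutI_nonneg n x π m jj i j
      · rw [yy, if_neg hQ]
        have hP : j ∉ Pf n x π m t i := fun hh =>
          hQ (Pf_subset_Qf hs π hm htm.1 htm.2 i hh)
        rw [Pf, if_neg (by omega)] at hP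
        simp only [Finset.mem_filter, Finset.mem_univ, true_and, not_forall] at hP
        obtain ⟨jj0, hjj0, hne⟩ := hP
        have hterm : cutI n x π m jj0 i j = 1 := by
          rw [cutI, if_neg (fun h => hne h.symm)]
        calc (1:ℝ) = cutI n x π m jj0 i j := hterm.symm
          _ ≤ ∑ jj ∈ Finset.Icc (ks t) n, cutI n x π m jj i j :=
            Finset.single_le_sum (fun jj _ => cutI_nonneg n x π m jj i j) hjj0
  have hsum := Finset.sum_le_sum hpt
  rw [Finset.sum_add_distrib] at hsum
  have h2 : ∑ t ∈ Finset.Icc 1 (n-1), (if t ≤ 3 then (1:ℝ) else 0) ≤ 3 := by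
    rw [← Finset.sum_filter]
    have hsub : (Finset.Icc 1 (n-1)).filter (fun t => t ≤ 3) ⊆ Finset.Icc 1 3 := by
      intro t ht
      rw [Finset.mem_filter, Finset.mem_Icc] at ht
      rw [Finset.mem_Icc]
      exact ⟨ht.1.1, ht.2⟩
    have := Finset.card_le_card hsub
    rw [Finset.sum_const, nsmul_eq_mul, mul_one]
    simp only [Nat.card_Icc] at this
    have h3 : ((Finset.Icc 1 (n-1)).filter (fun t => t ≤ 3)).card ≤ 3 := by omega
    exact_mod_cast h3
  have h3 : ∑ t ∈ Finset.Icc 1 (n-1),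
      (if 4 ≤ t then ∑ jj ∈ Finset.Icc (ks t) n, cutI n x π m jj i j else 0) ≤
      8 * ∑ jj ∈ Finset.range (n + 1), (2:ℝ) ^ jj * cutI n x π m jj i j := by
    have hIcc : ∀ t : ℕ, Finset.Icc (ks t) n = (Finset.range (n+1)).filter (fun jj => ks t ≤ jj) := by
      intro t
      ext jj
      simp only [Finset.mem_Icc, Finset.mem_filter, Finset.mem_range, Nat.lt_succ_iff]
      tauto
    calc ∑ t ∈ Finset.Icc 1 (n-1),
        (if 4 ≤ t then ∑ jj ∈ Finset.Icc (ks t) n, cutI n x π m jj i j else 0)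
        = ∑ t ∈ (Finset.Icc 1 (n-1)).filter (fun t => 4 ≤ t),
            ∑ jj ∈ Finset.Icc (ks t) n, cutI n x π m jj i j := by
          rw [Finset.sum_filter]
      _ = ∑ t ∈ (Finset.Icc 1 (n-1)).filter (fun t => 4 ≤ t),
            ∑ jj ∈ Finset.range (n+1), (if ks t ≤ jj then cutI n x π m jj i j else 0) := by
          refine Finset.sum_congr rfl fun t _ => ?_
          rw [hIcc t, Finset.sum_filter]
      _ = ∑ jj ∈ Finset.range (n+1), ∑ t ∈ (Finset.Icc 1 (n-1)).filter (fun t => 4 ≤ t),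
            (if ks t ≤ jj then cutI n x π m jj i j else 0) := Finset.sum_comm
      _ ≤ ∑ jj ∈ Finset.range (n+1), 8 * ((2:ℝ) ^ jj * cutI n x π m jj i j) := by
          refine Finset.sum_le_sum fun jj _ => ?_
          rw [← Finset.sum_filter]
          have hsub : ((Finset.Icc 1 (n-1)).filter (fun t => 4 ≤ t)).filter
              (fun t => ks t ≤ jj) ⊆ Finset.Icc 4 (2 ^ (jj + 3) - 1) := by
            intro t ht
            simp only [Finset.mem_filter, Finset.mem_Icc] at ht
            rw [Finset.mem_Icc]
            have := lt_pow_of_ks_le ht.1.2 ht.2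
            omega
          have hcard : (((Finset.Icc 1 (n-1)).filter (fun t => 4 ≤ t)).filter
              (fun t => ks t ≤ jj)).card ≤ 8 * 2 ^ jj := by
            have h1 := Finset.card_le_card hsub
            rw [Nat.card_Icc] at h1
            have h2 : 2 ^ (jj + 3) = 8 * 2 ^ jj := by ring
            omega
          rw [Finset.sum_const]
          have hc0 := cutI_nonneg n x π m jj i j
          calc ((((Finset.Icc 1 (n-1)).filter (fun t => 4 ≤ t)).filter
                (fun t => ks t ≤ jj)).card : ℕ) • cutI n x π m jj i j
              = ((((Finset.Icc 1 (n-1)).filter (fun t => 4 ≤ t)).filter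
                (fun t => ks t ≤ jj)).card : ℝ) * cutI n x π m jj i j := by
                rw [nsmul_eq_mul]
            _ ≤ ((8 * 2 ^ jj : ℕ) : ℝ) * cutI n x π m jj i j := by
                apply mul_le_mul_of_nonneg_right _ hc0
                exact_mod_cast hcard
            _ = 8 * ((2:ℝ) ^ jj * cutI n x π m jj i j) := by
                push_cast; ring
      _ = 8 * ∑ jj ∈ Finset.range (n + 1), (2:ℝ) ^ jj * cutI n x π m jj i j := by
          rw [Finset.mul_sum]
  linarith

lemma swap_mem_of_mem {T : Finset V} {v v' w : V} (hv : v ∈ T) (hv' : v' ∈ T) (hw : w ∈ T) :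
    Equiv.swap v v' w ∈ T := by
  rcases eq_or_ne w v with rfl | h1
  · rwa [Equiv.swap_apply_left]
  rcases eq_or_ne w v' with rfl | h2
  · rwa [Equiv.swap_apply_right]
  · rwa [Equiv.swap_apply_of_ne_of_ne h1 h2]

lemma amin_mul_swap (π : Equiv.Perm V) (T : Finset V) (hT : T.Nonempty) {v v' : V}
    (hv : v ∈ T) (hv' : v' ∈ T) :
    amin (π * Equiv.swap v v') T hT = Equiv.swap v v' (amin π T hT) := by
  set σ := Equiv.swap v v' with hσ
  have hmem : σ (amin π T hT) ∈ T := swap_mem_of_mem hv hv' (amin_mem π T hT)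
  refine (amin_eq (π * σ) T hT hmem ?_).symm
  intro w hw
  have hq : ∀ u : V, qq (π * σ) u = qq π (σ u) := fun u => rfl
  rw [hq, hq]
  have : σ (σ (amin π T hT)) = amin π T hT := Equiv.swap_apply_self _ _ _
  rw [this]
  exact amin_min π T hT (σ w) (swap_mem_of_mem hv hv' hw)

lemma perm_count (T : Finset V) {v : V} (hv : v ∈ T) :
    T.card * ((Finset.univ : Finset (Equiv.Perm V)).filter
      (fun π => ∀ w ∈ T, qq π v ≤ qq π w)).card
    = (Finset.univ : Finset (Equiv.Perm V)).card := by
  classical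
  have hT : T.Nonempty := ⟨v, hv⟩
  have hfil : ∀ v' ∈ T, ((Finset.univ : Finset (Equiv.Perm V)).filter
      (fun π => ∀ w ∈ T, qq π v' ≤ qq π w)) =
      ((Finset.univ : Finset (Equiv.Perm V)).filter (fun π => amin π T hT = v')) := by
    intro v' hv'
    ext π
    simp only [Finset.mem_filter, Finset.mem_univ, true_and]
    constructor
    · intro h
      exact (amin_eq π T hT hv' h).symm
    · intro h w hw
      rw [← h]
      exact amin_min π T hT w hw
  have hcards : ∀ v' ∈ T,
      ((Finset.univ : Finset (Equiv.Perm V)).filter (fun π => amin π T hT = v')).card =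
      ((Finset.univ : Finset (Equiv.Perm V)).filter (fun π => amin π T hT = v)).card := by
    intro v' hv'
    set σ := Equiv.swap v' v with hσ
    refine Finset.card_bij' (fun π _ => π * σ) (fun π _ => π * σ) ?_ ?_ ?_ ?_
    · intro π hπ
      simp only [Finset.mem_filter, Finset.mem_univ, true_and] at hπ ⊢
      rw [amin_mul_swap π T hT hv' hv, hπ]
      exact Equiv.swap_apply_left v' v
    · intro π hπ
      simp only [Finset.mem_filter, Finset.mem_univ, true_and] at hπ ⊢
      rw [amin_mul_swap π T hT hv' hv, hπ]
      exact Equiv.swap_apply_right v' v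
    · intro π _
      show π * σ * σ = π
      rw [mul_assoc, hσ, Equiv.swap_mul_self, mul_one]
    · intro π _
      show π * σ * σ = π
      rw [mul_assoc, hσ, Equiv.swap_mul_self, mul_one]
  have hfib : (Finset.univ : Finset (Equiv.Perm V)).card =
      ∑ v' ∈ T, ((Finset.univ : Finset (Equiv.Perm V)).filter
        (fun π => amin π T hT = v')).card := by
    apply Finset.card_eq_sum_card_fiberwise
    intro π _
    exact amin_mem π T hT
  rw [hfil v hv, hfib]
  rw [Finset.sum_congr rfl hcards, Finset.sum_const, smul_eq_mul]

noncomputable def aa (n : ℕ) (x : ℕ → V → V → ℝ) (i j v : V) : ℝ :=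
  min (rho n x v i) (rho n x v j)

noncomputable def bb (n : ℕ) (x : ℕ → V → V → ℝ) (i j v : V) : ℝ :=
  max (rho n x v i) (rho n x v j)

lemma aa_nonneg (hs : Setup V n x) (i j v : V) : 0 ≤ aa n x i j v :=
  le_min (rho_nonneg hs v i) (rho_nonneg hs v j)

lemma aa_le_bb (n : ℕ) (x : ℕ → V → V → ℝ) (i j v : V) : aa n x i j v ≤ bb n x i j v :=
  min_le_max

lemma bb_sub_aa (hs : Setup V n x) (i j v : V) :
    bb n x i j v - aa n x i j v ≤ rho n x i j := by
  have h1 : rho n x v i ≤ rho n x v j + rho n x j i := rho_tri hs v j i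
  have h2 : rho n x v j ≤ rho n x v i + rho n x i j := rho_tri hs v i j
  have hsymm : rho n x j i = rho n x i j := rho_symm hs j i
  rw [aa, bb]
  rcases le_total (rho n x v i) (rho n x v j) with h | h
  · rw [min_eq_left h, max_eq_right h]; linarith
  · rw [min_eq_right h, max_eq_left h]; linarith

lemma cut_le (hs : Setup V n x) (π : Equiv.Perm V) (m jj : ℕ) (i j : V) :
    cutI n x π m jj i j ≤ ∑ v ∈ Finset.univ,
      (if aa n x i j v ≤ rr n m jj ∧ rr n m jj < bb n x i j v then (1:ℝ) else 0) *
      (if ∀ w ∈ Finset.univ.filter (fun w' => aa n x i j w' ≤ aa n x i j v),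
          qq π v ≤ qq π w then (1:ℝ) else 0) := by
  have hterm0 : ∀ v ∈ (Finset.univ : Finset V), (0:ℝ) ≤
      (if aa n x i j v ≤ rr n m jj ∧ rr n m jj < bb n x i j v then (1:ℝ) else 0) *
      (if ∀ w ∈ Finset.univ.filter (fun w' => aa n x i j w' ≤ aa n x i j v),
          qq π v ≤ qq π w then (1:ℝ) else 0) := by
    intro v _
    apply mul_nonneg <;> (split <;> norm_num)
  by_cases hcc : cc n x π m jj i = cc n x π m jj j
  · rw [cutI, if_pos hcc]
    exact Finset.sum_nonneg hterm0
  · rw [cutI, if_neg hcc]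
    have hrr0 : 0 ≤ rr n m jj := rr_nonneg hs.h2 m jj
    set T' := Finset.univ.filter (fun v => aa n x i j v ≤ rr n m jj) with hT'
    have hiT : i ∈ T' := by
      rw [hT', Finset.mem_filter]
      refine ⟨Finset.mem_univ i, ?_⟩
      rw [aa, rho_self hs]
      exact le_trans (min_le_left _ _) hrr0
    have hTne : T'.Nonempty := ⟨i, hiT⟩
    set vs := amin π T' hTne with hvs
    have hvsT : vs ∈ T' := amin_mem π T' hTne
    have h1 : aa n x i j vs ≤ rr n m jj := by
      rw [hT'] at hvsT
      exact (Finset.mem_filter.mp hvsT).2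
    have h2 : rr n m jj < bb n x i j vs := by
      by_contra hcon
      push_neg at hcon
      have hri : rho n x vs i ≤ rr n m jj :=
        le_trans (le_trans (le_max_left _ _) hcon) le_rfl
      have hrj : rho n x vs j ≤ rr n m jj :=
        le_trans (le_trans (le_max_right _ _) hcon) le_rfl
      have hmin : ∀ w, rho n x w i ≤ rr n m jj → qq π vs ≤ qq π w := by
        intro w hw
        apply amin_min π T' hTne
        rw [hT', Finset.mem_filter]
        exact ⟨Finset.mem_univ w, le_trans (min_le_left _ _) hw⟩
      have hminj : ∀ w, rho n x w j ≤ rr n m jj → qq π vs ≤ qq π w := by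
        intro w hw
        apply amin_min π T' hTne
        rw [hT', Finset.mem_filter]
        exact ⟨Finset.mem_univ w, le_trans (min_le_right _ _) hw⟩
      have hcceqi : vs = cc n x π m jj i := cc_eq hs π m jj i vs hri hmin
      have hcceqj : vs = cc n x π m jj j := cc_eq hs π m jj j vs hrj hminj
      exact hcc (hcceqi ▸ hcceqj ▸ rfl)
    have h3 : ∀ w ∈ Finset.univ.filter (fun w' => aa n x i j w' ≤ aa n x i j vs),
        qq π vs ≤ qq π w := by
      intro w hw
      rw [Finset.mem_filter] at hw
      apply amin_min π T' hTne
      rw [hT', Finset.mem_filter]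
      exact ⟨Finset.mem_univ w, le_trans hw.2 h1⟩
    calc (1:ℝ) = (if aa n x i j vs ≤ rr n m jj ∧ rr n m jj < bb n x i j vs then (1:ℝ) else 0) *
        (if ∀ w ∈ Finset.univ.filter (fun w' => aa n x i j w' ≤ aa n x i j vs),
            qq π vs ≤ qq π w then (1:ℝ) else 0) := by
          rw [if_pos ⟨h1, h2⟩, if_pos h3, mul_one]
      _ ≤ _ := Finset.single_le_sum hterm0 (Finset.mem_univ vs)

lemma count_m (hn : 2 ≤ n) (jj : ℕ) (A B : ℝ) :
    (((Finset.range (MM n)).filter fun m => A ≤ rr n m jj ∧ rr n m jj < B).card : ℝ)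
      ≤ 2 * (MM n) / 2 ^ jj * (max 0 (min B ((2:ℝ)^jj) - max A ((2:ℝ)^jj / 2))) + 1 := by
  set N := (Finset.range (MM n)).filter fun m => A ≤ rr n m jj ∧ rr n m jj < B with hN
  have hrhs0 : (0:ℝ) ≤ 2 * (MM n) / 2 ^ jj * (max 0 (min B ((2:ℝ)^jj) - max A ((2:ℝ)^jj / 2))) := by
    apply mul_nonneg
    · positivity
    · exact le_max_left _ _
  rcases Finset.eq_empty_or_nonempty N with he | hne
  · rw [he]; simp; linarith
  have hm0 := Finset.min'_mem N hne
  have hm1 := Finset.max'_mem N hne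
  set m0 := N.min' hne with hm0d
  set m1 := N.max' hne with hm1d
  have hm01 : m0 ≤ m1 := Finset.min'_le N m1 hm1
  have hsub : N ⊆ Finset.Icc m0 m1 := by
    intro a ha
    rw [Finset.mem_Icc]
    exact ⟨Finset.min'_le N a ha, Finset.le_max' N a ha⟩
  have hcard : N.card ≤ m1 + 1 - m0 := by
    have := Finset.card_le_card hsub
    rwa [Nat.card_Icc] at this
  have hcardR : (N.card : ℝ) ≤ (m1 : ℝ) - m0 + 1 := by
    have h1 : (N.card : ℝ) ≤ ((m1 + 1 - m0 : ℕ) : ℝ) := by exact_mod_cast hcard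
    have h2 : ((m1 + 1 - m0 : ℕ) : ℝ) = (m1 : ℝ) - m0 + 1 := by
      push_cast [Nat.cast_sub (by omega : m0 ≤ m1 + 1)]
      ring
    linarith
  -- facts about rr at m0 and m1
  rw [hN, Finset.mem_filter, Finset.mem_range] at hm0 hm1
  have hMpos : (0:ℝ) < (MM n : ℝ) := by exact_mod_cast MM_pos hn
  have hdiff : rr n m1 jj - rr n m0 jj = ((m1 : ℝ) - m0) * 2 ^ jj / (2 * MM n) := by
    rw [rr, rr]; field_simp; ring
  have hup : rr n m1 jj ≤ min B ((2:ℝ)^jj) := le_min (le_of_lt hm1.2.2) (le_of_lt (rr_lt hn hm1.1 jj))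
  have hlo : max A ((2:ℝ)^jj / 2) ≤ rr n m0 jj := max_le hm0.2.1 (rr_lb hn m0 jj)
  have hgap : rr n m1 jj - rr n m0 jj ≤ max 0 (min B ((2:ℝ)^jj) - max A ((2:ℝ)^jj / 2)) :=
    le_trans (by linarith) (le_max_right _ _)
  have hpow : (0:ℝ) < 2 ^ jj := by positivity
  have hm1m0 : (m1 : ℝ) - m0 ≤ 2 * (MM n) / 2 ^ jj * (max 0 (min B ((2:ℝ)^jj) - max A ((2:ℝ)^jj / 2))) := by
    have h1 : ((m1 : ℝ) - m0) * 2 ^ jj / (2 * MM n) ≤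
        max 0 (min B ((2:ℝ)^jj) - max A ((2:ℝ)^jj / 2)) := by
      rw [← hdiff]; exact hgap
    have h2 : ((m1 : ℝ) - m0) = (((m1 : ℝ) - m0) * 2 ^ jj / (2 * MM n)) * (2 * MM n / 2 ^ jj) := by
      field_simp
    rw [h2]
    calc (((m1 : ℝ) - m0) * 2 ^ jj / (2 * MM n)) * (2 * MM n / 2 ^ jj)
        ≤ (max 0 (min B ((2:ℝ)^jj) - max A ((2:ℝ)^jj / 2))) * (2 * MM n / 2 ^ jj) := by
          apply mul_le_mul_of_nonneg_right h1
          positivity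
      _ = 2 * (MM n) / 2 ^ jj * (max 0 (min B ((2:ℝ)^jj) - max A ((2:ℝ)^jj / 2))) := by ring
  linarith

lemma clamp_diff {A B l u : ℝ} (hAB : A ≤ B) (hlu : l ≤ u) :
    max 0 (min B u - max A l) ≤ max A (min B u) - max A (min B l) := by
  have h1 : max A (min B l) ≤ max A (min B u) := max_le_max le_rfl (min_le_min le_rfl hlu)
  have h2 : min B u ≤ max A (min B u) := le_max_right _ _
  have h3 : max A (min B l) ≤ max A l := max_le_max le_rfl (min_le_right _ _)
  exact max_le (by linarith) (by linarith)

lemma telescope (n : ℕ) {A B : ℝ} (hAB : A ≤ B) :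
    ∑ jj ∈ Finset.range (n + 1), max 0 (min B ((2:ℝ)^jj) - max A ((2:ℝ)^jj / 2)) ≤ B - A := by
  set F : ℕ → ℝ := fun k => max A (min B ((2:ℝ)^k / 2)) with hF
  have key : ∀ jj, max 0 (min B ((2:ℝ)^jj) - max A ((2:ℝ)^jj / 2)) ≤ F (jj + 1) - F jj := by
    intro jj
    have h2 : (2:ℝ)^(jj+1) / 2 = 2^jj := by ring
    have hlu : (2:ℝ)^jj / 2 ≤ 2^jj := by
      have : (0:ℝ) < 2^jj := by positivity
      linarith
    have := clamp_diff hAB hlu (u := (2:ℝ)^jj) (l := (2:ℝ)^jj/2)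
    rw [hF]
    simp only [h2]
    exact this
  calc ∑ jj ∈ Finset.range (n + 1), max 0 (min B ((2:ℝ)^jj) - max A ((2:ℝ)^jj / 2))
      ≤ ∑ jj ∈ Finset.range (n + 1), (F (jj + 1) - F jj) :=
        Finset.sum_le_sum fun jj _ => key jj
    _ = F (n + 1) - F 0 := Finset.sum_range_sub F (n + 1)
    _ ≤ B - A := by
        have h1 : F (n + 1) ≤ B := max_le hAB (min_le_left _ _)
        have h2 : A ≤ F 0 := le_max_left _ _
        linarith

lemma rank_sum (f : V → ℝ) :
    ∑ v ∈ (Finset.univ : Finset V), (1:ℝ) / ((Finset.univ.filter fun w => f w ≤ f v).card) ≤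
    ∑ s ∈ Finset.Icc 1 (Fintype.card V), (1:ℝ) / s := by
  classical
  set e0 := Fintype.equivFin V with he0
  set rk : V → ℕ := fun v =>
    (Finset.univ.filter fun w => f w < f v ∨ (f w = f v ∧ e0 w ≤ e0 v)).card with hrk
  have hrk1 : ∀ v, 1 ≤ rk v := by
    intro v
    rw [hrk]
    apply Finset.card_pos.mpr
    exact ⟨v, by simp⟩
  have hrkle : ∀ v, rk v ≤ (Finset.univ.filter fun w => f w ≤ f v).card := by
    intro v
    apply Finset.card_le_card
    intro w hw
    simp only [Finset.mem_filter, Finset.mem_univ, true_and] at hw ⊢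
    rcases hw with h | h
    · exact le_of_lt h
    · exact le_of_eq h.1
  have hlt : ∀ v v', (f v < f v' ∨ (f v = f v' ∧ e0 v < e0 v')) → rk v < rk v' := by
    intro v v' hvv
    apply Finset.card_lt_card
    constructor
    · intro w hw
      simp only [Finset.mem_filter, Finset.mem_univ, true_and] at hw ⊢
      rcases hvv with h | h
      · rcases hw with hw | hw
        · exact Or.inl (lt_trans hw h)
        · exact Or.inl (hw.1 ▸ h)
      · rcases hw with hw | hw
        · exact Or.inl (h.1 ▸ hw)
        · exact Or.inr ⟨hw.1.trans h.1, le_trans hw.2 (le_of_lt h.2)⟩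
    · intro hsub
      have hv' : v' ∈ Finset.univ.filter fun w => f w < f v' ∨ (f w = f v' ∧ e0 w ≤ e0 v') := by
        simp
      have := hsub hv'
      simp only [Finset.mem_filter, Finset.mem_univ, true_and] at this
      rcases hvv with h | h
      · rcases this with h2 | h2
        · exact absurd (lt_trans h h2) (lt_irrefl _)
        · rw [h2.1] at h; exact absurd h (lt_irrefl _)
      · rcases this with h2 | h2
        · rw [h.1] at h2; exact absurd h2 (lt_irrefl _)
        · exact absurd (lt_of_lt_of_le h.2 h2.2) (lt_irrefl _)
  have hinj : Set.InjOn rk (Finset.univ : Finset V) := by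
    intro v _ v' _ hvv
    by_contra hne
    have hene : e0 v ≠ e0 v' := fun h => hne (e0.injective h)
    rcases lt_trichotomy (f v) (f v') with h | h | h
    · exact absurd hvv (Nat.ne_of_lt (hlt v v' (Or.inl h)))
    · rcases lt_or_gt_of_ne hene with h2 | h2
      · exact absurd hvv (Nat.ne_of_lt (hlt v v' (Or.inr ⟨h, h2⟩)))
      · exact absurd hvv.symm (Nat.ne_of_lt (hlt v' v (Or.inr ⟨h.symm, h2⟩)))
    · exact absurd hvv.symm (Nat.ne_of_lt (hlt v' v (Or.inl h)))
  have step1 : ∑ v ∈ (Finset.univ : Finset V), (1:ℝ) /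
      ((Finset.univ.filter fun w => f w ≤ f v).card) ≤
      ∑ v ∈ (Finset.univ : Finset V), (1:ℝ) / (rk v) := by
    refine Finset.sum_le_sum fun v _ => ?_
    apply one_div_le_one_div_of_le
    · exact_mod_cast hrk1 v
    · exact_mod_cast hrkle v
  have step2 : ∑ v ∈ (Finset.univ : Finset V), (1:ℝ) / (rk v) =
      ∑ s ∈ (Finset.univ : Finset V).image rk, (1:ℝ) / s := by
    rw [Finset.sum_image]
    intro a ha b hb hab
    exact hinj ha hb hab
  have step3 : ∑ s ∈ (Finset.univ : Finset V).image rk, (1:ℝ) / s ≤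
      ∑ s ∈ Finset.Icc 1 (Fintype.card V), (1:ℝ) / s := by
    apply Finset.sum_le_sum_of_subset_of_nonneg
    · intro s hsm
      rw [Finset.mem_image] at hsm
      obtain ⟨v, _, hv⟩ := hsm
      rw [Finset.mem_Icc, ← hv]
      constructor
      · exact hrk1 v
      · rw [hrk]
        calc (Finset.univ.filter fun w => f w < f v ∨ (f w = f v ∧ e0 w ≤ e0 v)).card
            ≤ (Finset.univ : Finset V).card := Finset.card_le_card (Finset.filter_subset _ _)
          _ = Fintype.card V := Finset.card_univ
    · intro s _ _
      positivity
  calc _ ≤ _ := step1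
    _ = _ := step2
    _ ≤ _ := step3

lemma fubini4 (Sp : Finset (Equiv.Perm V)) (Sm SJ : Finset ℕ)
    (f : ℕ → ℕ → V → ℝ) (g : Equiv.Perm V → V → ℝ) :
    ∑ π ∈ Sp, ∑ m ∈ Sm, ∑ jj ∈ SJ, ∑ v ∈ (Finset.univ : Finset V),
      (2:ℝ)^jj * (f m jj v * g π v) =
    ∑ v ∈ (Finset.univ : Finset V), ∑ jj ∈ SJ,
      (2:ℝ)^jj * ((∑ m ∈ Sm, f m jj v) * (∑ π ∈ Sp, g π v)) := by
  calc ∑ π ∈ Sp, ∑ m ∈ Sm, ∑ jj ∈ SJ, ∑ v ∈ (Finset.univ : Finset V),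
        (2:ℝ)^jj * (f m jj v * g π v)
      = ∑ π ∈ Sp, ∑ jj ∈ SJ, ∑ m ∈ Sm, ∑ v ∈ (Finset.univ : Finset V),
        (2:ℝ)^jj * (f m jj v * g π v) := by
        exact Finset.sum_congr rfl fun π _ => Finset.sum_comm
    _ = ∑ jj ∈ SJ, ∑ π ∈ Sp, ∑ m ∈ Sm, ∑ v ∈ (Finset.univ : Finset V),
        (2:ℝ)^jj * (f m jj v * g π v) := Finset.sum_comm
    _ = ∑ jj ∈ SJ, ∑ π ∈ Sp, ∑ v ∈ (Finset.univ : Finset V), ∑ m ∈ Sm,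
        (2:ℝ)^jj * (f m jj v * g π v) := by
        exact Finset.sum_congr rfl fun jj _ => Finset.sum_congr rfl fun π _ => Finset.sum_comm
    _ = ∑ jj ∈ SJ, ∑ v ∈ (Finset.univ : Finset V), ∑ π ∈ Sp, ∑ m ∈ Sm,
        (2:ℝ)^jj * (f m jj v * g π v) := by
        exact Finset.sum_congr rfl fun jj _ => Finset.sum_comm
    _ = ∑ v ∈ (Finset.univ : Finset V), ∑ jj ∈ SJ, ∑ π ∈ Sp, ∑ m ∈ Sm,
        (2:ℝ)^jj * (f m jj v * g π v) := Finset.sum_comm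
    _ = ∑ v ∈ (Finset.univ : Finset V), ∑ jj ∈ SJ,
        (2:ℝ)^jj * ((∑ m ∈ Sm, f m jj v) * (∑ π ∈ Sp, g π v)) := by
        refine Finset.sum_congr rfl fun v _ => Finset.sum_congr rfl fun jj _ => ?_
        calc ∑ π ∈ Sp, ∑ m ∈ Sm, (2:ℝ)^jj * (f m jj v * g π v)
            = ∑ π ∈ Sp, g π v * ((2:ℝ)^jj * ∑ m ∈ Sm, f m jj v) := by
              refine Finset.sum_congr rfl fun π _ => ?_
              rw [Finset.mul_sum, Finset.mul_sum]
              refine Finset.sum_congr rfl fun m _ => by ring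
          _ = (2:ℝ)^jj * ((∑ m ∈ Sm, f m jj v) * (∑ π ∈ Sp, g π v)) := by
              rw [← Finset.sum_mul]
              ring

lemma pair_exp (hs : Setup V n x) (i j : V) :
    ∑ π ∈ (Finset.univ : Finset (Equiv.Perm V)), ∑ m ∈ Finset.range (MM n),
      ∑ jj ∈ Finset.range (n + 1), (2:ℝ) ^ jj * cutI n x π m jj i j ≤
    (((Finset.univ : Finset (Equiv.Perm V)).card : ℝ) * MM n) *
      (2 * (∑ s ∈ Finset.Icc 1 (Fintype.card V), (1:ℝ) / s) * rho n x i j + 2) := by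
  classical
  have hM0 : (0:ℝ) < (MM n : ℝ) := by exact_mod_cast MM_pos hs.h2
  have hP0 : (0:ℝ) ≤ ((Finset.univ : Finset (Equiv.Perm V)).card : ℝ) := by positivity
  have hρ0 : 0 ≤ rho n x i j := rho_nonneg hs i j
  -- step 1 : pointwise bound
  have step1 : ∑ π ∈ (Finset.univ : Finset (Equiv.Perm V)), ∑ m ∈ Finset.range (MM n),
      ∑ jj ∈ Finset.range (n + 1), (2:ℝ) ^ jj * cutI n x π m jj i j ≤
      ∑ π ∈ (Finset.univ : Finset (Equiv.Perm V)), ∑ m ∈ Finset.range (MM n),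
      ∑ jj ∈ Finset.range (n + 1), ∑ v ∈ (Finset.univ : Finset V),
        (2:ℝ) ^ jj * ((if aa n x i j v ≤ rr n m jj ∧ rr n m jj < bb n x i j v then (1:ℝ) else 0) *
          (if ∀ w ∈ Finset.univ.filter (fun w' => aa n x i j w' ≤ aa n x i j v),
              qq π v ≤ qq π w then (1:ℝ) else 0)) := by
    refine Finset.sum_le_sum fun π _ => Finset.sum_le_sum fun m _ =>
      Finset.sum_le_sum fun jj _ => ?_
    have hc := cut_le hs π m jj i j
    have h2 : (0:ℝ) ≤ 2 ^ jj := by positivity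
    calc (2:ℝ) ^ jj * cutI n x π m jj i j
        ≤ (2:ℝ) ^ jj * ∑ v ∈ Finset.univ,
          (if aa n x i j v ≤ rr n m jj ∧ rr n m jj < bb n x i j v then (1:ℝ) else 0) *
          (if ∀ w ∈ Finset.univ.filter (fun w' => aa n x i j w' ≤ aa n x i j v),
              qq π v ≤ qq π w then (1:ℝ) else 0) := mul_le_mul_of_nonneg_left hc h2
      _ = _ := Finset.mul_sum _ _ _
  -- step 2 : Fubini
  have step2 := fubini4 (V := V) Finset.univ (Finset.range (MM n)) (Finset.range (n+1))
    (fun m jj v => if aa n x i j v ≤ rr n m jj ∧ rr n m jj < bb n x i j v then (1:ℝ) else 0)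
    (fun π v => if ∀ w ∈ Finset.univ.filter (fun w' => aa n x i j w' ≤ aa n x i j v),
        qq π v ≤ qq π w then (1:ℝ) else 0)
  rw [step2] at step1
  refine le_trans step1 ?_
  -- step 3 : bound each v
  have hcnt : ∀ v jj, (∑ m ∈ Finset.range (MM n),
      if aa n x i j v ≤ rr n m jj ∧ rr n m jj < bb n x i j v then (1:ℝ) else 0) =
      (((Finset.range (MM n)).filter fun m =>
        aa n x i j v ≤ rr n m jj ∧ rr n m jj < bb n x i j v).card : ℝ) := by
    intro v jj
    rw [Finset.sum_boole]
  have hEv : ∀ v, (∑ π ∈ (Finset.univ : Finset (Equiv.Perm V)),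
      if ∀ w ∈ Finset.univ.filter (fun w' => aa n x i j w' ≤ aa n x i j v),
          qq π v ≤ qq π w then (1:ℝ) else 0) =
      (((Finset.univ : Finset (Equiv.Perm V)).filter
        (fun π => ∀ w ∈ Finset.univ.filter (fun w' => aa n x i j w' ≤ aa n x i j v),
          qq π v ≤ qq π w)).card : ℝ) := by
    intro v
    rw [Finset.sum_boole]
  have hvSv : ∀ v : V, v ∈ Finset.univ.filter (fun w' => aa n x i j w' ≤ aa n x i j v) := by
    intro v; simp
  have hSv1 : ∀ v : V, 1 ≤ (Finset.univ.filter (fun w' => aa n x i j w' ≤ aa n x i j v)).card :=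
    fun v => Finset.card_pos.mpr ⟨v, hvSv v⟩
  have hEvcard : ∀ v : V,
      (((Finset.univ : Finset (Equiv.Perm V)).filter
        (fun π => ∀ w ∈ Finset.univ.filter (fun w' => aa n x i j w' ≤ aa n x i j v),
          qq π v ≤ qq π w)).card : ℝ) =
      ((Finset.univ : Finset (Equiv.Perm V)).card : ℝ) /
        ((Finset.univ.filter (fun w' => aa n x i j w' ≤ aa n x i j v)).card : ℝ) := by
    intro v
    have h := perm_count (Finset.univ.filter (fun w' => aa n x i j w' ≤ aa n x i j v)) (hvSv v)
    have hc : ((Finset.univ.filter (fun w' => aa n x i j w' ≤ aa n x i j v)).card : ℝ) ≠ 0 := by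
      have := hSv1 v
      positivity
    rw [eq_div_iff hc]
    have hcast := congrArg (Nat.cast : ℕ → ℝ) h
    push_cast at hcast
    linarith [hcast]
  -- bound the jj-sum for fixed v
  have hjj : ∀ v : V, ∑ jj ∈ Finset.range (n + 1), (2:ℝ)^jj *
      ((((Finset.range (MM n)).filter fun m =>
        aa n x i j v ≤ rr n m jj ∧ rr n m jj < bb n x i j v).card : ℝ)) ≤
      2 * (MM n) * rho n x i j + 2 ^ (n+1) := by
    intro v
    have hterm : ∀ jj ∈ Finset.range (n+1), (2:ℝ)^jj *
        ((((Finset.range (MM n)).filter fun m =>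
          aa n x i j v ≤ rr n m jj ∧ rr n m jj < bb n x i j v).card : ℝ)) ≤
        2 * (MM n) * (max 0 (min (bb n x i j v) ((2:ℝ)^jj) -
          max (aa n x i j v) ((2:ℝ)^jj / 2))) + 2^jj := by
      intro jj _
      have hc := count_m hs.h2 jj (aa n x i j v) (bb n x i j v)
      have hpow : (0:ℝ) < 2^jj := by positivity
      have := mul_le_mul_of_nonneg_left hc (le_of_lt hpow)
      calc (2:ℝ)^jj * ((((Finset.range (MM n)).filter fun m =>
            aa n x i j v ≤ rr n m jj ∧ rr n m jj < bb n x i j v).card : ℝ))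
          ≤ (2:ℝ)^jj * (2 * (MM n) / 2 ^ jj * (max 0 (min (bb n x i j v) ((2:ℝ)^jj) -
              max (aa n x i j v) ((2:ℝ)^jj / 2))) + 1) := this
        _ = 2 * (MM n) * (max 0 (min (bb n x i j v) ((2:ℝ)^jj) -
              max (aa n x i j v) ((2:ℝ)^jj / 2))) + 2^jj := by
            field_simp
    have hsum := Finset.sum_le_sum hterm
    rw [Finset.sum_add_distrib, ← Finset.mul_sum] at hsum
    have htel := telescope n (aa_le_bb n x i j v)
    have hba := bb_sub_aa hs i j v
    have hgeo : ∑ jj ∈ Finset.range (n + 1), (2:ℝ)^jj ≤ 2^(n+1) := by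
      rw [geom_sum_eq (by norm_num : (2:ℝ) ≠ 1) (n+1)]
      have h2p : (0:ℝ) < 2^(n+1) := by positivity
      norm_num
    have h1 : 2 * ((MM n : ℝ)) * (∑ jj ∈ Finset.range (n + 1),
        max 0 (min (bb n x i j v) ((2:ℝ)^jj) - max (aa n x i j v) ((2:ℝ)^jj / 2))) ≤
        2 * (MM n) * rho n x i j := by
      have h2 : (∑ jj ∈ Finset.range (n + 1),
          max 0 (min (bb n x i j v) ((2:ℝ)^jj) - max (aa n x i j v) ((2:ℝ)^jj / 2))) ≤
          rho n x i j := le_trans htel (by linarith)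
      have h3 : (0:ℝ) ≤ 2 * (MM n : ℝ) := by positivity
      exact mul_le_mul_of_nonneg_left h2 h3
    linarith
  -- combine
  have hmain : ∑ v ∈ (Finset.univ : Finset V), ∑ jj ∈ Finset.range (n + 1),
      (2:ℝ) ^ jj * ((∑ m ∈ Finset.range (MM n),
        if aa n x i j v ≤ rr n m jj ∧ rr n m jj < bb n x i j v then (1:ℝ) else 0) *
      (∑ π ∈ (Finset.univ : Finset (Equiv.Perm V)),
        if ∀ w ∈ Finset.univ.filter (fun w' => aa n x i j w' ≤ aa n x i j v),
            qq π v ≤ qq π w then (1:ℝ) else 0)) ≤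
      ∑ v ∈ (Finset.univ : Finset V), (2 * (MM n) * rho n x i j + 2 ^ (n+1)) *
        (((Finset.univ : Finset (Equiv.Perm V)).card : ℝ) /
          ((Finset.univ.filter (fun w' => aa n x i j w' ≤ aa n x i j v)).card : ℝ)) := by
    refine Finset.sum_le_sum fun v _ => ?_
    have e1 : ∀ jj ∈ Finset.range (n+1), (2:ℝ) ^ jj * ((∑ m ∈ Finset.range (MM n),
        if aa n x i j v ≤ rr n m jj ∧ rr n m jj < bb n x i j v then (1:ℝ) else 0) *
        (∑ π ∈ (Finset.univ : Finset (Equiv.Perm V)),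
          if ∀ w ∈ Finset.univ.filter (fun w' => aa n x i j w' ≤ aa n x i j v),
              qq π v ≤ qq π w then (1:ℝ) else 0)) =
        ((2:ℝ) ^ jj * (((Finset.range (MM n)).filter fun m =>
          aa n x i j v ≤ rr n m jj ∧ rr n m jj < bb n x i j v).card : ℝ)) *
        (((Finset.univ : Finset (Equiv.Perm V)).card : ℝ) /
          ((Finset.univ.filter (fun w' => aa n x i j w' ≤ aa n x i j v)).card : ℝ)) := by
      intro jj _
      rw [hcnt v jj, hEv v, hEvcard v]
      ring
    rw [Finset.sum_congr rfl e1, ← Finset.sum_mul]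
    have hq : (0:ℝ) ≤ ((Finset.univ : Finset (Equiv.Perm V)).card : ℝ) /
        ((Finset.univ.filter (fun w' => aa n x i j w' ≤ aa n x i j v)).card : ℝ) := by
      positivity
    exact mul_le_mul_of_nonneg_right (hjj v) hq
  refine le_trans hmain ?_
  -- final arithmetic
  have hsplit : ∑ v ∈ (Finset.univ : Finset V), (2 * (MM n) * rho n x i j + 2 ^ (n+1)) *
      (((Finset.univ : Finset (Equiv.Perm V)).card : ℝ) /
        ((Finset.univ.filter (fun w' => aa n x i j w' ≤ aa n x i j v)).card : ℝ)) =
      (2 * (MM n) * rho n x i j + 2 ^ (n+1)) *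
        ((Finset.univ : Finset (Equiv.Perm V)).card : ℝ) *
      ∑ v ∈ (Finset.univ : Finset V),
        (1:ℝ) / ((Finset.univ.filter (fun w' => aa n x i j w' ≤ aa n x i j v)).card : ℝ) := by
    rw [Finset.mul_sum]
    refine Finset.sum_congr rfl fun v _ => ?_
    field_simp
  rw [hsplit]
  have hrank := rank_sum (fun v => aa n x i j v)
  have hrankn : ∑ v ∈ (Finset.univ : Finset V),
      (1:ℝ) / ((Finset.univ.filter (fun w' => aa n x i j w' ≤ aa n x i j v)).card : ℝ) ≤
      (Fintype.card V : ℝ) := by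
    calc ∑ v ∈ (Finset.univ : Finset V),
        (1:ℝ) / ((Finset.univ.filter (fun w' => aa n x i j w' ≤ aa n x i j v)).card : ℝ)
        ≤ ∑ _v ∈ (Finset.univ : Finset V), (1:ℝ) := by
          refine Finset.sum_le_sum fun v _ => ?_
          rw [div_le_one (by exact_mod_cast hSv1 v)]
          exact_mod_cast hSv1 v
      _ = (Fintype.card V : ℝ) := by simp
  have hHnonneg : (0:ℝ) ≤ ∑ v ∈ (Finset.univ : Finset V),
      (1:ℝ) / ((Finset.univ.filter (fun w' => aa n x i j w' ≤ aa n x i j v)).card : ℝ) := by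
    refine Finset.sum_nonneg fun v _ => by positivity
  have hcardn : (Fintype.card V : ℝ) = (n : ℝ) := by exact_mod_cast hs.hcard
  have hMeq : (MM n : ℝ) = (n:ℝ) * 2^(n+1) := by
    rw [MM]; push_cast; ring
  set Hv := ∑ v ∈ (Finset.univ : Finset V),
      (1:ℝ) / ((Finset.univ.filter (fun w' => aa n x i j w' ≤ aa n x i j v)).card : ℝ) with hHv
  set HH := ∑ s ∈ Finset.Icc 1 (Fintype.card V), (1:ℝ) / s with hHH
  have hHH0 : (0:ℝ) ≤ HH := le_trans hHnonneg hrank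
  calc (2 * (MM n) * rho n x i j + 2 ^ (n+1)) *
        ((Finset.univ : Finset (Equiv.Perm V)).card : ℝ) * Hv
      = (2 * (MM n) * rho n x i j) * ((Finset.univ : Finset (Equiv.Perm V)).card : ℝ) * Hv +
        (2:ℝ)^(n+1) * ((Finset.univ : Finset (Equiv.Perm V)).card : ℝ) * Hv := by ring
    _ ≤ (2 * (MM n) * rho n x i j) * ((Finset.univ : Finset (Equiv.Perm V)).card : ℝ) * HH +
        (2:ℝ)^(n+1) * ((Finset.univ : Finset (Equiv.Perm V)).card : ℝ) * ((n:ℝ)) := by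
        refine add_le_add ?_ ?_
        · refine mul_le_mul_of_nonneg_left hrank ?_
          positivity
        · refine mul_le_mul_of_nonneg_left (le_trans hrankn (le_of_eq hcardn)) ?_
          positivity
    _ ≤ (((Finset.univ : Finset (Equiv.Perm V)).card : ℝ) * MM n) *
        (2 * HH * rho n x i j + 2) := by
        rw [hMeq]
        nlinarith [hP0, hρ0, hHH0, pow_pos (show (0:ℝ) < 2 by norm_num) (n+1),
          mul_nonneg (mul_nonneg hP0 hρ0) hHH0]

lemma HH_le (hs : Setup V n x) :
    ∑ s ∈ Finset.Icc 1 (Fintype.card V), (1:ℝ) / s ≤ 1 + Real.log n := by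
  have hc : Fintype.card V = n := hs.hcard
  rw [hc]
  have h := harmonic_le_one_add_log n
  have he : ((harmonic n : ℚ) : ℝ) = ∑ s ∈ Finset.Icc 1 n, (1:ℝ) / s := by
    rw [harmonic_eq_sum_Icc]
    push_cast
    refine Finset.sum_congr rfl fun s _ => ?_
    rw [one_div]
  linarith [he ▸ h]

lemma log_n_lb (hs : Setup V n x) : (0.6931471803 : ℝ) ≤ Real.log n := by
  have h2 : (2:ℝ) ≤ (n:ℝ) := by exact_mod_cast hs.h2
  have := Real.log_le_log (by norm_num : (0:ℝ) < 2) h2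
  linarith [Real.log_two_gt_d9]

lemma pair_bound (hs : Setup V n x) {i j : V} (hij : i ≠ j) :
    ∑ π ∈ (Finset.univ : Finset (Equiv.Perm V)), ∑ m ∈ Finset.range (MM n),
      ∑ t ∈ Finset.Icc 1 (n - 1), yy n x π m t i j ≤
    (((Finset.univ : Finset (Equiv.Perm V)).card : ℝ) * MM n) *
      (100 * Real.log n * rho n x i j) := by
  have step1 : ∑ π ∈ (Finset.univ : Finset (Equiv.Perm V)), ∑ m ∈ Finset.range (MM n),
      ∑ t ∈ Finset.Icc 1 (n - 1), yy n x π m t i j ≤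
      ∑ π ∈ (Finset.univ : Finset (Equiv.Perm V)), ∑ m ∈ Finset.range (MM n),
      (3 + 8 * ∑ jj ∈ Finset.range (n + 1), (2:ℝ) ^ jj * cutI n x π m jj i j) := by
    refine Finset.sum_le_sum fun π _ => Finset.sum_le_sum fun m hm => ?_
    exact sum_yy_le hs π (Finset.mem_range.mp hm)
  have step2 : ∑ π ∈ (Finset.univ : Finset (Equiv.Perm V)), ∑ m ∈ Finset.range (MM n),
      (3 + 8 * ∑ jj ∈ Finset.range (n + 1), (2:ℝ) ^ jj * cutI n x π m jj i j) =
      (((Finset.univ : Finset (Equiv.Perm V)).card : ℝ) * MM n) * 3 +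
      8 * ∑ π ∈ (Finset.univ : Finset (Equiv.Perm V)), ∑ m ∈ Finset.range (MM n),
        ∑ jj ∈ Finset.range (n + 1), (2:ℝ) ^ jj * cutI n x π m jj i j := by
    rw [Finset.sum_congr rfl (fun π _ => Finset.sum_add_distrib), Finset.sum_add_distrib]
    congr 1
    · rw [Finset.sum_congr rfl (fun π (_ : π ∈ Finset.univ) => Finset.sum_const (3:ℝ)),
        Finset.sum_const]
      simp only [Finset.card_range, nsmul_eq_mul, smul_eq_mul]
      ring
    · rw [Finset.mul_sum]
      refine Finset.sum_congr rfl fun π _ => ?_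
      rw [Finset.mul_sum]
  have step3 := pair_exp hs i j
  set P : ℝ := ((Finset.univ : Finset (Equiv.Perm V)).card : ℝ) with hP
  set HH := ∑ s ∈ Finset.Icc 1 (Fintype.card V), (1:ℝ) / s with hHH
  set L := Real.log n with hL
  set ρ := rho n x i j with hρd
  have hPM0 : (0:ℝ) ≤ P * MM n := by positivity
  have hρ1 : (1:ℝ) ≤ ρ := one_le_rho hs hij
  have hρ0 : (0:ℝ) ≤ ρ := by linarith
  have hHH0 : (0:ℝ) ≤ HH := Finset.sum_nonneg fun s _ => by positivity
  have hHHle : HH ≤ 1 + L := HH_le hs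
  have hLlb : (0.6931471803 : ℝ) ≤ L := log_n_lb hs
  have hfinal : (3:ℝ) + 8 * (2 * HH * ρ + 2) ≤ 100 * L * ρ := by nlinarith
  calc ∑ π ∈ (Finset.univ : Finset (Equiv.Perm V)), ∑ m ∈ Finset.range (MM n),
      ∑ t ∈ Finset.Icc 1 (n - 1), yy n x π m t i j
      ≤ (P * MM n) * 3 + 8 * ∑ π ∈ (Finset.univ : Finset (Equiv.Perm V)),
          ∑ m ∈ Finset.range (MM n), ∑ jj ∈ Finset.range (n + 1),
            (2:ℝ) ^ jj * cutI n x π m jj i j := by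
        rw [← step2]; exact step1
    _ ≤ (P * MM n) * 3 + 8 * ((P * MM n) * (2 * HH * ρ + 2)) := by
        have h8 : (0:ℝ) ≤ 8 := by norm_num
        nlinarith [step3]
    _ = (P * MM n) * (3 + 8 * (2 * HH * ρ + 2)) := by ring
    _ ≤ (P * MM n) * (100 * L * ρ) := mul_le_mul_of_nonneg_left hfinal hPM0

theorem main (hs : Setup V n x) (κ : V → V → ℝ) (hκ0 : ∀ i j : V, 0 ≤ κ i j) :
    ∃ y : ℕ → V → V → ℝ, ILPUltraFeasible n y ∧
      ∑ t ∈ Finset.Icc 1 (n - 1), (1 / 2 : ℝ) * ∑ i : V, ∑ j : V, κ i j * y t i j ≤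
        100 * Real.log n *
          ∑ t ∈ Finset.Icc 1 (n - 1), (1 / 2 : ℝ) * ∑ i : V, ∑ j : V, κ i j * x t i j := by
  classical
  set Ω := (Finset.univ : Finset (Equiv.Perm V)) ×ˢ Finset.range (MM n) with hΩ
  have hΩne : Ω.Nonempty := by
    refine ⟨(1, 0), ?_⟩
    rw [hΩ, Finset.mem_product]
    exact ⟨Finset.mem_univ _, Finset.mem_range.mpr (MM_pos hs.h2)⟩
  -- rearrangement helper
  have hre : ∀ z : ℕ → V → V → ℝ,
      ∑ t ∈ Finset.Icc 1 (n - 1), (1 / 2 : ℝ) * ∑ i : V, ∑ j : V, κ i j * z t i j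
      = (1 / 2 : ℝ) * ∑ i : V, ∑ j : V, κ i j * (∑ t ∈ Finset.Icc 1 (n - 1), z t i j) := by
    intro z
    rw [← Finset.mul_sum]
    congr 1
    calc ∑ t ∈ Finset.Icc 1 (n - 1), ∑ i : V, ∑ j : V, κ i j * z t i j
        = ∑ i : V, ∑ t ∈ Finset.Icc 1 (n - 1), ∑ j : V, κ i j * z t i j := Finset.sum_comm
      _ = ∑ i : V, ∑ j : V, ∑ t ∈ Finset.Icc 1 (n - 1), κ i j * z t i j := by
          exact Finset.sum_congr rfl fun i _ => Finset.sum_comm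
      _ = ∑ i : V, ∑ j : V, κ i j * ∑ t ∈ Finset.Icc 1 (n - 1), z t i j := by
          refine Finset.sum_congr rfl fun i _ => Finset.sum_congr rfl fun j _ => ?_
          rw [Finset.mul_sum]
  have hLP : ∑ t ∈ Finset.Icc 1 (n - 1), (1 / 2 : ℝ) * ∑ i : V, ∑ j : V, κ i j * x t i j
      = (1 / 2 : ℝ) * ∑ i : V, ∑ j : V, κ i j * rho n x i j := hre x
  -- the expected cost bound
  have hkey : ∑ ω ∈ Ω, ∑ t ∈ Finset.Icc 1 (n - 1),
      (1 / 2 : ℝ) * ∑ i : V, ∑ j : V, κ i j * yy n x ω.1 ω.2 t i j ≤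
      ∑ ω ∈ Ω, 100 * Real.log n *
        ∑ t ∈ Finset.Icc 1 (n - 1), (1 / 2 : ℝ) * ∑ i : V, ∑ j : V, κ i j * x t i j := by
    have hconst : ∑ ω ∈ Ω, 100 * Real.log n *
        ∑ t ∈ Finset.Icc 1 (n - 1), (1 / 2 : ℝ) * ∑ i : V, ∑ j : V, κ i j * x t i j =
        (((Finset.univ : Finset (Equiv.Perm V)).card : ℝ) * MM n) *
          (100 * Real.log n *
            ((1 / 2 : ℝ) * ∑ i : V, ∑ j : V, κ i j * rho n x i j)) := by
      rw [Finset.sum_const, hΩ, Finset.card_product, Finset.card_range, hLP, nsmul_eq_mul]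
      push_cast
      ring
    rw [hconst]
    -- expand left side
    have hexp : ∑ ω ∈ Ω, ∑ t ∈ Finset.Icc 1 (n - 1),
        (1 / 2 : ℝ) * ∑ i : V, ∑ j : V, κ i j * yy n x ω.1 ω.2 t i j =
        (1 / 2 : ℝ) * ∑ i : V, ∑ j : V, κ i j *
          (∑ π ∈ (Finset.univ : Finset (Equiv.Perm V)), ∑ m ∈ Finset.range (MM n),
            ∑ t ∈ Finset.Icc 1 (n - 1), yy n x π m t i j) := by
      rw [hΩ, Finset.sum_product]
      calc ∑ π ∈ (Finset.univ : Finset (Equiv.Perm V)), ∑ m ∈ Finset.range (MM n),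
            ∑ t ∈ Finset.Icc 1 (n - 1), (1 / 2 : ℝ) * ∑ i : V, ∑ j : V, κ i j * yy n x π m t i j
          = ∑ π ∈ (Finset.univ : Finset (Equiv.Perm V)), ∑ m ∈ Finset.range (MM n),
            (1 / 2 : ℝ) * ∑ i : V, ∑ j : V, κ i j *
              (∑ t ∈ Finset.Icc 1 (n - 1), yy n x π m t i j) := by
            exact Finset.sum_congr rfl fun π _ => Finset.sum_congr rfl fun m _ => hre _
        _ = (1 / 2 : ℝ) * ∑ π ∈ (Finset.univ : Finset (Equiv.Perm V)),
              ∑ m ∈ Finset.range (MM n), ∑ i : V, ∑ j : V, κ i j *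
                (∑ t ∈ Finset.Icc 1 (n - 1), yy n x π m t i j) := by
            rw [Finset.mul_sum]
            refine Finset.sum_congr rfl fun π _ => ?_
            rw [Finset.mul_sum]
        _ = (1 / 2 : ℝ) * ∑ i : V, ∑ j : V, κ i j *
              (∑ π ∈ (Finset.univ : Finset (Equiv.Perm V)), ∑ m ∈ Finset.range (MM n),
                ∑ t ∈ Finset.Icc 1 (n - 1), yy n x π m t i j) := by
            congr 1
            calc ∑ π ∈ (Finset.univ : Finset (Equiv.Perm V)), ∑ m ∈ Finset.range (MM n),
                  ∑ i : V, ∑ j : V, κ i j * (∑ t ∈ Finset.Icc 1 (n - 1), yy n x π m t i j)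
                = ∑ π ∈ (Finset.univ : Finset (Equiv.Perm V)), ∑ i : V,
                    ∑ m ∈ Finset.range (MM n), ∑ j : V, κ i j *
                      (∑ t ∈ Finset.Icc 1 (n - 1), yy n x π m t i j) := by
                  exact Finset.sum_congr rfl fun π _ => Finset.sum_comm
              _ = ∑ i : V, ∑ π ∈ (Finset.univ : Finset (Equiv.Perm V)),
                    ∑ m ∈ Finset.range (MM n), ∑ j : V, κ i j *
                      (∑ t ∈ Finset.Icc 1 (n - 1), yy n x π m t i j) := Finset.sum_comm
              _ = ∑ i : V, ∑ π ∈ (Finset.univ : Finset (Equiv.Perm V)), ∑ j : V,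
                    ∑ m ∈ Finset.range (MM n), κ i j *
                      (∑ t ∈ Finset.Icc 1 (n - 1), yy n x π m t i j) := by
                  exact Finset.sum_congr rfl fun i _ =>
                    Finset.sum_congr rfl fun π _ => Finset.sum_comm
              _ = ∑ i : V, ∑ j : V, ∑ π ∈ (Finset.univ : Finset (Equiv.Perm V)),
                    ∑ m ∈ Finset.range (MM n), κ i j *
                      (∑ t ∈ Finset.Icc 1 (n - 1), yy n x π m t i j) := by
                  exact Finset.sum_congr rfl fun i _ => Finset.sum_comm
              _ = ∑ i : V, ∑ j : V, κ i j *
                    (∑ π ∈ (Finset.univ : Finset (Equiv.Perm V)), ∑ m ∈ Finset.range (MM n),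
                      ∑ t ∈ Finset.Icc 1 (n - 1), yy n x π m t i j) := by
                  refine Finset.sum_congr rfl fun i _ => Finset.sum_congr rfl fun j _ => ?_
                  rw [Finset.mul_sum]
                  refine Finset.sum_congr rfl fun π _ => ?_
                  rw [Finset.mul_sum]
    rw [hexp]
    have hWbound : ∀ i j : V, κ i j *
        (∑ π ∈ (Finset.univ : Finset (Equiv.Perm V)), ∑ m ∈ Finset.range (MM n),
          ∑ t ∈ Finset.Icc 1 (n - 1), yy n x π m t i j) ≤
        κ i j * ((((Finset.univ : Finset (Equiv.Perm V)).card : ℝ) * MM n) *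
          (100 * Real.log n * rho n x i j)) := by
      intro i j
      rcases eq_or_ne i j with rfl | hij
      · have hz : ∑ π ∈ (Finset.univ : Finset (Equiv.Perm V)), ∑ m ∈ Finset.range (MM n),
            ∑ t ∈ Finset.Icc 1 (n - 1), yy n x π m t i i = 0 := by
          refine Finset.sum_eq_zero fun π _ => Finset.sum_eq_zero fun m _ =>
            Finset.sum_eq_zero fun t _ => yy_diag n x π m t i
        rw [hz, rho_self hs]
        simp
      · exact mul_le_mul_of_nonneg_left (pair_bound hs hij) (hκ0 i j)
    calc (1 / 2 : ℝ) * ∑ i : V, ∑ j : V, κ i j *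
          (∑ π ∈ (Finset.univ : Finset (Equiv.Perm V)), ∑ m ∈ Finset.range (MM n),
            ∑ t ∈ Finset.Icc 1 (n - 1), yy n x π m t i j)
        ≤ (1 / 2 : ℝ) * ∑ i : V, ∑ j : V, κ i j *
            ((((Finset.univ : Finset (Equiv.Perm V)).card : ℝ) * MM n) *
              (100 * Real.log n * rho n x i j)) := by
          refine mul_le_mul_of_nonneg_left ?_ (by norm_num)
          exact Finset.sum_le_sum fun i _ => Finset.sum_le_sum fun j _ => hWbound i j
      _ = (((Finset.univ : Finset (Equiv.Perm V)).card : ℝ) * MM n) *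
            (100 * Real.log n * ((1 / 2 : ℝ) * ∑ i : V, ∑ j : V, κ i j * rho n x i j)) := by
          rw [Finset.mul_sum, Finset.mul_sum, Finset.mul_sum]
          rw [Finset.mul_sum]
          refine Finset.sum_congr rfl fun i _ => ?_
          rw [Finset.mul_sum, Finset.mul_sum, Finset.mul_sum, Finset.mul_sum]
          refine Finset.sum_congr rfl fun j _ => by ring
  obtain ⟨ω, hωm, hωle⟩ := Finset.exists_le_of_sum_le hΩne hkey
  have hm : ω.2 < MM n := by
    rw [hΩ, Finset.mem_product] at hωm
    exact Finset.mem_range.mp hωm.2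
  exact ⟨yy n x ω.1 ω.2, yy_feasible hs ω.1 hm, hωle⟩

theorem statement12_aux {V : Type} [Fintype V] [DecidableEq V] (n : ℕ) (κ : V → V → ℝ)
    (x : ℕ → V → V → ℝ)
    (hcard : Fintype.card V = n) (h2 : 2 ≤ n)
    (hκsym : ∀ i j : V, κ i j = κ j i) (hκ0 : ∀ i j : V, 0 ≤ κ i j)
    (hLP : LPUltraFeasible n x) :
    ∃ y : ℕ → V → V → ℝ, ILPUltraFeasible n y ∧
      ∑ t ∈ Finset.Icc 1 (n - 1), (1 / 2 : ℝ) * ∑ i : V, ∑ j : V, κ i j * y t i j ≤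
        100 * Real.log n *
          ∑ t ∈ Finset.Icc 1 (n - 1), (1 / 2 : ℝ) * ∑ i : V, ∑ j : V, κ i j * x t i j := by
  obtain ⟨h1, hd, hb, ht, hl, hsp⟩ := hLP
  exact main ⟨hcard, h2, h1, hd, hb, ht, hl, hsp⟩ κ hκ0

end St12

/-- Rounding theorem: for every `ε ∈ (0,1)` there is a constant `C(ε) > 0` such that
for every finite `V` with `|V| = n ≥ 2`, every symmetric nonnegative `κ`, and every
feasible solution `(x^t)` of LP-ultrametric, there is a feasible solution `(y^t)` of
ILP-ultrametric whose objective value is at most `C(ε) · log n` times that of `(x^t)`. -/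
theorem statement12 (ε : ℝ) (hε0 : 0 < ε) (hε1 : ε < 1) :
    ∃ C : ℝ, 0 < C ∧
      ∀ (V : Type) [Fintype V] [DecidableEq V], ∀ (n : ℕ) (κ : V → V → ℝ)
        (x : ℕ → V → V → ℝ),
        Fintype.card V = n → 2 ≤ n →
        (∀ i j : V, κ i j = κ j i) → (∀ i j : V, 0 ≤ κ i j) →
        LPUltraFeasible n x →
        ∃ y : ℕ → V → V → ℝ, ILPUltraFeasible n y ∧
          ∑ t ∈ Finset.Icc 1 (n - 1), (1 / 2) * ∑ i : V, ∑ j : V, κ i j * y t i j ≤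
            C * Real.log n *
              ∑ t ∈ Finset.Icc 1 (n - 1), (1 / 2) * ∑ i : V, ∑ j : V, κ i j * x t i j := by
  refine ⟨100, by norm_num, ?_⟩
  intro V _ _ n κ x hcard h2 hκsym hκ0 hLP
  exact St12.statement12_aux n κ x hcard h2 hκsym hκ0 hLP
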